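/- arXiv:1710.10476 — 9 statements merged into one kernel-verified Lean document; each statement's English description precedes it below -/
import Mathlib

section
/- Let K be a category with coproducts in which all coproduct injections are monomorphisms, and let λ be a regular cardinal. Then an object A of K is nearly λ-presentable if and only if for every family (K_i)_{i∈I} of objects of K and every morphism f : A → ∐_{i∈I} K_i there exists a subset J ⊆ I of cardinality less than λ such that f factorizes as A → ∐_{j∈J} K_j → ∐_{i∈I} K_i, where the second morphism is the subcoproduct injection. -/
universe w v u u₁ u₂

open CategoryTheory CategoryTheory.Limits Opposite

namespace NLP

variable {C : Type u} [Category.{v} C]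

/-- The poset of subsets of `I` of cardinality `< κ`, ordered by inclusion. -/
abbrev SmallSub (κ : Cardinal.{w}) (I : Type w) : Type w :=
  {J : Set I // Cardinal.mk J < κ}

section
variable [HasCoproducts.{w} C]

/-- The diagram of subcoproducts `∐_{j ∈ J} K_j`, for `J ⊆ I` with `|J| < κ`,
with subcoproduct injections as connecting morphisms. -/
noncomputable def subDiag (κ : Cardinal.{w}) {I : Type w} (K : I → C) :
    SmallSub κ I ⥤ C where
  obj J := ∐ (fun j : J.1 => K j)
  map {J J'} f :=
    Sigma.desc (fun j => Sigma.ι (fun j' : J'.1 => K j') ⟨j.1, leOfHom f j.2⟩)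
  map_id J := by
    ext j
    simp
  map_comp {J J' J''} f g := by
    ext j
    simp

/-- The cocone on the subcoproduct diagram with vertex the full coproduct `∐ K`;
this is the "special κ-directed colimit" expressing `∐ K` as the κ-directed colimit
of its subcoproducts of size `< κ`. -/
noncomputable def subCocone (κ : Cardinal.{w}) {I : Type w} (K : I → C) :
    Cocone (subDiag (C := C) κ K) where
  pt := ∐ K
  ι :=
    { app := fun J => Sigma.desc (fun j => Sigma.ι K j.1)
      naturality := by
        intro J J' f
        dsimp only [subDiag]
        ext j
        simp }

/-- The subcoproduct injection `∐_{j ∈ J} K_j ⟶ ∐_{i ∈ I} K_i`. -/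
noncomputable def subInj (κ : Cardinal.{w}) {I : Type w} (K : I → C) (J : SmallSub κ I) :
    (∐ fun j : J.1 => K j) ⟶ ∐ K :=
  Sigma.desc (fun j => Sigma.ι K j.1)

/-- An object `A` is nearly `κ`-presentable if its hom-functor `K(A,-)` preserves
special `κ`-directed colimits. -/
def NearlyPresentable (κ : Cardinal.{w}) (A : C) : Prop :=
  ∀ {I : Type w} (K : I → C),
    Nonempty (IsColimit ((coyoneda.obj (op A)).mapCocone (subCocone κ K)))

/-- `C` has monomorphisms stable under special `κ`-directed colimits. -/
def MonosStableUnderSpecial (κ : Cardinal.{w}) : Prop :=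
  ∀ {I : Type w} (K : I → C) {X : C} (f : (∐ K) ⟶ X),
    (∀ J : SmallSub κ I, Mono (subInj (C := C) κ K J ≫ f)) → Mono f

end

/-- A preordered set is `κ`-directed if every subset of cardinality `< κ` has
an upper bound. -/
def IsCardinalDirected (κ : Cardinal.{w}) (J : Type w) [Preorder J] : Prop :=
  ∀ S : Set J, Cardinal.mk S < κ → ∃ j : J, ∀ s ∈ S, s ≤ j

/-- An object `A` is `κ`-presentable if its hom-functor preserves `κ`-directed colimits. -/
def PresentableObj (κ : Cardinal.{v}) (A : C) : Prop :=
  ∀ (J : Type v) [PartialOrder J], IsCardinalDirected κ J →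
    Nonempty (PreservesColimitsOfShape J (coyoneda.obj (op A)))

/-- The restricted Yoneda functor `E_S : C ⥤ Set^{S^op}` for a full subcategory
on a set `S` of objects. -/
def restrictedYoneda (S : Set C) : C ⥤ ((ObjectProperty.FullSubcategory (· ∈ S))ᵒᵖ ⥤ Type v) :=
  yoneda ⋙ (Functor.whiskeringLeft (ObjectProperty.FullSubcategory (· ∈ S))ᵒᵖ Cᵒᵖ (Type v)).obj
    (ObjectProperty.ι (· ∈ S)).op

/-- A set `S` of objects is a strong generator if it is small and the restricted
Yoneda functor `E_S : C ⥤ Set^{S^op}` is faithful and conservative. -/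
structure IsStrongGenerator (S : Set C) : Prop where
  small : Small.{v} S
  faithful : (restrictedYoneda S).Faithful
  reflectsIsos : (restrictedYoneda S).ReflectsIsomorphisms

/-- A set `S` of objects is dense if the restricted Yoneda functor
`E_S : C ⥤ Set^{S^op}` is fully faithful. -/
def IsDenseSub (S : Set C) : Prop :=
  (restrictedYoneda S).Full ∧ (restrictedYoneda S).Faithful

/-- A category is weakly co-wellpowered if every object has only a set of strong
quotients. -/
def WeaklyCoWellPowered (C : Type u) [Category.{v} C] : Prop :=
  ∀ X : C, ∃ (ι : Type v) (Z : ι → C) (p : ∀ i, X ⟶ Z i),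
    (∀ i, StrongEpi (p i)) ∧
    ∀ (Y : C) (f : X ⟶ Y), StrongEpi f → ∃ (i : ι) (e : Z i ≅ Y), p i ≫ e.hom = f

/-- A cocomplete category is nearly locally `κ`-presentable if it is weakly
co-wellpowered and has a strong generator consisting of nearly `κ`-presentable
objects. -/
structure IsNearlyLocallyPresentable (κ : Cardinal.{v}) (C : Type u) [Category.{v} C] : Prop where
  isRegular : κ.IsRegular
  cocomplete : HasColimitsOfSize.{v, v} C
  wcwp : WeaklyCoWellPowered C
  exists_gen : ∃ S : Set C, IsStrongGenerator S ∧
    ∀ A ∈ S, haveI := cocomplete; NearlyPresentable κ A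

/-- A category is locally `κ`-presentable if it is cocomplete and has a strong
generator consisting of `κ`-presentable objects. -/
structure IsLocallyPresentable (κ : Cardinal.{v}) (C : Type u) [Category.{v} C] : Prop where
  isRegular : κ.IsRegular
  cocomplete : HasColimitsOfSize.{v, v} C
  exists_gen : ∃ S : Set C, IsStrongGenerator S ∧ ∀ A ∈ S, PresentableObj κ A

/-- A category has regular factorizations if every morphism factors as a regular
epimorphism followed by a monomorphism. -/
def HasRegularFactorizations (C : Type u) [Category.{v} C] : Prop :=
  ∀ ⦃X Y : C⦄ (f : X ⟶ Y), ∃ (Z : C) (e : X ⟶ Z) (m : Z ⟶ Y),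
    Nonempty (RegularEpi e) ∧ Mono m ∧ e ≫ m = f

/-- A category has (strong epi, mono)-factorizations if every morphism factors as
a strong epimorphism followed by a monomorphism. -/
def HasStrongEpiMonoFacts (C : Type u) [Category.{v} C] : Prop :=
  ∀ ⦃X Y : C⦄ (f : X ⟶ Y), ∃ (Z : C) (e : X ⟶ Z) (m : Z ⟶ Y),
    StrongEpi e ∧ Mono m ∧ e ≫ m = f

/-- A class of objects `T` is closed under colimits if the vertex of any colimit
cocone on a small diagram with values in `T` belongs to `T`. -/
def ClosedUnderColimits (T : Set C) : Prop :=
  ∀ {J : Type v} [SmallCategory J] (F : J ⥤ C), (∀ j, F.obj j ∈ T) →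
    ∀ (c : Cocone F), IsColimit c → c.pt ∈ T

end NLP

namespace NLPAux

variable {C : Type u} [Category.{v} C] [HasCoproducts.{v} C]

noncomputable def subInj' {I : Type v} (K : I → C) (J : Set I) :
    (∐ fun j : J => K j) ⟶ ∐ K :=
  Sigma.desc (fun j => Sigma.ι K j.1)

noncomputable def binL {I : Type v} (K : I → C) (J : Set I) : ULift.{v} Bool → C :=
  fun b => match b with
  | ⟨true⟩ => ∐ (fun j : J => K j)
  | ⟨false⟩ => ∐ (fun j : (Jᶜ : Set I) => K j)

noncomputable def binφ {I : Type v} (K : I → C) (J : Set I) : (∐ binL K J) ⟶ ∐ K :=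
  Sigma.desc (fun b => match b with
  | ⟨true⟩ => subInj' K J
  | ⟨false⟩ => subInj' K (Jᶜ : Set I))

noncomputable def binψ {I : Type v} (K : I → C) (J : Set I) [DecidablePred (· ∈ J)] :
    (∐ K) ⟶ ∐ binL K J :=
  Sigma.desc (fun i =>
    if h : i ∈ J then Sigma.ι (fun j : J => K j) ⟨i, h⟩ ≫ Sigma.ι (binL K J) ⟨true⟩
    else Sigma.ι (fun j : (Jᶜ : Set I) => K j) ⟨i, h⟩ ≫ Sigma.ι (binL K J) ⟨false⟩)

lemma mono_subInj' (hmono : ∀ {I : Type v} (K : I → C) (i : I), Mono (Sigma.ι K i))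
    {I : Type v} (K : I → C) (J : Set I) : Mono (subInj' K J) := by
  classical
  have hφψ : binφ K J ≫ binψ K J = 𝟙 _ := by
    ext ⟨b⟩ <;> cases b
    · rw [Category.comp_id]
      simp only [binφ, colimit.ι_desc_assoc, Cofan.mk_ι_app]
      show subInj' K (Jᶜ : Set I) ≫ binψ K J = Sigma.ι (binL K J) ⟨false⟩
      ext j
      simp only [subInj', binψ, colimit.ι_desc_assoc, colimit.ι_desc, Cofan.mk_ι_app]
      rw [dif_neg j.2]
    · rw [Category.comp_id]
      simp only [binφ, colimit.ι_desc_assoc, Cofan.mk_ι_app]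
      show subInj' K J ≫ binψ K J = Sigma.ι (binL K J) ⟨true⟩
      ext j
      simp only [subInj', binψ, colimit.ι_desc_assoc, colimit.ι_desc, Cofan.mk_ι_app]
      rw [dif_pos j.2]
  have hψφ : binψ K J ≫ binφ K J = 𝟙 _ := by
    ext i
    rw [Category.comp_id]
    simp only [binψ, colimit.ι_desc_assoc, Cofan.mk_ι_app]
    by_cases h : i ∈ J
    · rw [dif_pos h]
      simp only [Category.assoc, binφ, colimit.ι_desc, Cofan.mk_ι_app]
      show (Sigma.ι (fun j : J => K j) ⟨i, h⟩ ≫ Sigma.ι (binL K J) ⟨true⟩) ≫ binφ K J = Sigma.ι K i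
      refine (Category.assoc _ _ _).trans ((congrArg (fun t => Sigma.ι (fun j : J => K j) ⟨i, h⟩ ≫ t)
        (show Sigma.ι (binL K J) ⟨true⟩ ≫ binφ K J = subInj' K J by
          simp only [binφ, colimit.ι_desc, Cofan.mk_ι_app]; exact rfl)).trans ?_)
      show Sigma.ι (fun j : J => K j) ⟨i, h⟩ ≫ subInj' K J = Sigma.ι K i
      simp only [subInj', colimit.ι_desc, Cofan.mk_ι_app]
    · rw [dif_neg h]
      simp only [Category.assoc, binφ, colimit.ι_desc, Cofan.mk_ι_app]
      show (Sigma.ι (fun j : (Jᶜ : Set I) => K j) ⟨i, h⟩ ≫ Sigma.ι (binL K J) ⟨false⟩) ≫ binφ K J = Sigma.ι K i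
      refine (Category.assoc _ _ _).trans ((congrArg
        (fun t => Sigma.ι (fun j : (Jᶜ : Set I) => K j) ⟨i, h⟩ ≫ t)
        (show Sigma.ι (binL K J) ⟨false⟩ ≫ binφ K J = subInj' K (Jᶜ : Set I) by
          simp only [binφ, colimit.ι_desc, Cofan.mk_ι_app]; exact rfl)).trans ?_)
      show Sigma.ι (fun j : (Jᶜ : Set I) => K j) ⟨i, h⟩ ≫ subInj' K (Jᶜ : Set I) = Sigma.ι K i
      simp only [subInj', colimit.ι_desc, Cofan.mk_ι_app]
  have hiso : IsIso (binφ K J) := ⟨binψ K J, hφψ, hψφ⟩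
  have hι : subInj' K J = Sigma.ι (binL K J) ⟨true⟩ ≫ binφ K J := by
    simp only [binφ, colimit.ι_desc, Cofan.mk_ι_app]
  rw [hι]
  have := hmono (binL K J) ⟨true⟩
  exact @mono_comp _ _ _ _ _ _ this _ (@IsIso.mono_of_iso _ _ _ _ _ hiso)

end NLPAux

/-- In a category with coproducts in which all coproduct injections are
monomorphisms, an object `A` is nearly `κ`-presentable iff every morphism
`A ⟶ ∐_{i ∈ I} K_i` factors through a subcoproduct injection `∐_{j ∈ J} K_j ⟶ ∐_{i ∈ I} K_i`
with `|J| < κ`. -/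
theorem NLP.stmt0 {C : Type u} [Category.{v} C] [HasCoproducts.{v} C]
    (hmono : ∀ {I : Type v} (K : I → C) (i : I), Mono (Sigma.ι K i))
    (κ : Cardinal.{v}) (hκ : κ.IsRegular) (A : C) :
    NearlyPresentable κ A ↔
      ∀ {I : Type v} (K : I → C) (f : A ⟶ ∐ K),
        ∃ (J : SmallSub κ I) (g : A ⟶ ∐ fun j : J.1 => K j),
          g ≫ subInj (C := C) κ K J = f := by
  classical
  have hsubinj : ∀ {I : Type v} (K : I → C) (J : NLP.SmallSub κ I),
      NLP.subInj (C := C) κ K J = NLPAux.subInj' K J.1 := fun K J => rfl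
  constructor
  · intro h I K f
    obtain ⟨hc⟩ := h K
    obtain ⟨J, g, hg⟩ := Types.jointly_surjective_of_isColimit hc f
    exact ⟨J, g, hg⟩
  · intro h I K
    constructor
    apply Types.FilteredColimit.isColimitOf
    · intro f
      obtain ⟨J, g, hg⟩ := h K f
      exact ⟨J, g, hg.symm⟩
    · intro J J' g g' hgg
      have hU : Cardinal.mk (J.1 ∪ J'.1 : Set I) < κ :=
        lt_of_le_of_lt (Cardinal.mk_union_le _ _)
          (Cardinal.add_lt_of_lt hκ.aleph0_le J.2 J'.2)
      set U : NLP.SmallSub κ I := ⟨J.1 ∪ J'.1, hU⟩ with hUdef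
      have hle : J ≤ U := Set.subset_union_left
      have hle' : J' ≤ U := Set.subset_union_right
      refine ⟨U, homOfLE hle, homOfLE hle', ?_⟩
      have hdiag : ∀ (V : NLP.SmallSub κ I) (u : V ⟶ U),
          (NLP.subDiag (C := C) κ K).map u ≫ NLP.subInj (C := C) κ K U
            = NLP.subInj (C := C) κ K V := by
        intro V u
        dsimp only [NLP.subDiag, NLP.subInj]
        ext j
        simp
      have hm : Mono (NLP.subInj (C := C) κ K U) := by
        rw [hsubinj]; exact NLPAux.mono_subInj' hmono K U.1
      show g ≫ (NLP.subDiag (C := C) κ K).map (homOfLE hle)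
          = g' ≫ (NLP.subDiag (C := C) κ K).map (homOfLE hle')
      apply (cancel_mono (NLP.subInj (C := C) κ K U)).1
      show (g ≫ (NLP.subDiag (C := C) κ K).map (homOfLE hle)) ≫ _
          = (g' ≫ (NLP.subDiag (C := C) κ K).map (homOfLE hle')) ≫ _
      have e1 := congrArg (fun t => g ≫ t) (hdiag J (homOfLE hle))
      have e2 := congrArg (fun t => g' ≫ t) (hdiag J' (homOfLE hle'))
      exact (Category.assoc _ _ _).trans (e1.trans (hgg.trans (e2.symm.trans (Category.assoc _ _ _).symm)))
end

section
/- Let K be a category with coproducts. Every coproduct-presentable object of K (i.e., an object whose hom-functor preserves coproducts) is nearly ℵ₀-presentable. -/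
universe w v u u₁ u₂

open CategoryTheory CategoryTheory.Limits Opposite

namespace Scratch

variable {C : Type u} [Category.{v} C] [HasCoproducts.{v} C]

lemma key (A : C) {I : Type v} (K : I → C)
    (h : Nonempty (PreservesColimitsOfShape (Discrete I) (coyoneda.obj (op A)))) :
    Function.Bijective (fun p : Σ i, (A ⟶ K i) => p.2 ≫ Sigma.ι K p.1) := by
  obtain ⟨pc⟩ := h
  have ht : IsColimit ((coyoneda.obj (op A)).mapCocone (colimit.cocone (Discrete.functor K))) :=
    isColimitOfPreserves _ (colimit.isColimit _)
  let s : Cocone (Discrete.functor K ⋙ coyoneda.obj (op A)) :=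
    { pt := Σ i, (A ⟶ K i)
      ι := Discrete.natTrans fun j => TypeCat.ofHom fun g => ⟨j.as, g⟩ }
  have hd : ∀ (i : I) (g : A ⟶ K i),
      ht.desc s (g ≫ Sigma.ι K i) = ⟨i, g⟩ := fun i g =>
    ConcreteCategory.congr_hom (ht.fac s ⟨i⟩) g
  constructor
  · intro p q hpq
    have h1 := hd p.1 p.2
    have h2 := hd q.1 q.2
    simp only at hpq
    rw [hpq] at h1
    rw [h2] at h1
    rw [Sigma.eta, Sigma.eta] at h1
    exact h1.symm
  · intro x
    obtain ⟨j, y, hy⟩ := Types.jointly_surjective _ ht x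
    exact ⟨⟨j.as, y⟩, hy⟩

theorem stmt1 (A : C)
    (h : ∀ I : Type v,
      Nonempty (PreservesColimitsOfShape (Discrete I) (coyoneda.obj (op A)))) :
    NLP.NearlyPresentable (Cardinal.aleph0 : Cardinal.{v}) A := by
  intro I K
  refine ⟨Types.FilteredColimit.isColimitOf _ _ ?_ ?_⟩
  · intro x
    obtain ⟨⟨i, g⟩, hx⟩ := (key A K (h I)).2 x
    refine ⟨⟨{i}, by
      exact Cardinal.lt_aleph0_iff_set_finite.mpr (Set.finite_singleton i)⟩,
      g ≫ Sigma.ι (fun j : ({i} : Set I) => K j) ⟨i, rfl⟩, ?_⟩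
    rw [← hx]
    change g ≫ Sigma.ι K i = (g ≫ Sigma.ι (fun j : ({i} : Set I) => K j) ⟨i, rfl⟩) ≫
      Sigma.desc (fun j : ({i} : Set I) => Sigma.ι K j.1)
    rw [Category.assoc, Sigma.ι_desc]
  · intro J J' xi xj hij
    obtain ⟨⟨⟨i₀, hi₀⟩, gi⟩, hxi⟩ := (key A (fun a : J.1 => K a) (h _)).2 xi
    obtain ⟨⟨⟨j₀, hj₀⟩, gj⟩, hxj⟩ := (key A (fun a : J'.1 => K a) (h _)).2 xj
    have hs : (⟨i₀, gi⟩ : Σ i, A ⟶ K i) = ⟨j₀, gj⟩ := by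
      apply (key A K (h I)).1
      simp only
      rw [← hxi, ← hxj] at hij
      change (gi ≫ Sigma.ι (fun a : J.1 => K a) ⟨i₀, hi₀⟩) ≫
        Sigma.desc (fun j : J.1 => Sigma.ι K j.1) = (gj ≫ Sigma.ι (fun a : J'.1 => K a)
        ⟨j₀, hj₀⟩) ≫ Sigma.desc (fun j : J'.1 => Sigma.ι K j.1) at hij
      rw [Category.assoc, Category.assoc, Sigma.ι_desc, Sigma.ι_desc] at hij
      simpa [NLP.subCocone] using hij
    obtain ⟨h1, h2⟩ := Sigma.mk.inj_iff.mp hs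
    subst h1
    obtain rfl := eq_of_heq h2
    have hk : Cardinal.mk ↥(J.1 ∪ J'.1) < Cardinal.aleph0 :=
      Cardinal.lt_aleph0_iff_set_finite.mpr
        ((Cardinal.lt_aleph0_iff_set_finite.mp J.2).union
          (Cardinal.lt_aleph0_iff_set_finite.mp J'.2))
    refine ⟨⟨J.1 ∪ J'.1, hk⟩, homOfLE (show J ≤ _ from Set.subset_union_left),
      homOfLE (show J' ≤ _ from Set.subset_union_right), ?_⟩
    rw [← hxi, ← hxj]
    change (gi ≫ _) ≫ _ = (gi ≫ _) ≫ _
    simp [NLP.subDiag]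

end Scratch


/-- In a category with coproducts, every coproduct-presentable object
(i.e. one whose hom-functor preserves coproducts) is nearly `ℵ₀`-presentable. -/
theorem NLP.stmt1 {C : Type u} [Category.{v} C] [HasCoproducts.{v} C] (A : C)
    (h : ∀ I : Type v,
      Nonempty (PreservesColimitsOfShape (Discrete I) (coyoneda.obj (op A)))) :
    NearlyPresentable (Cardinal.aleph0 : Cardinal.{v}) A := by
  exact Scratch.stmt1 A h
end

section
/- Let K be a category with coproducts and λ a regular cardinal. A λ-small colimit of nearly λ-presentable objects of K is nearly λ-presentable; that is, if D : D → K is a diagram whose category D has fewer than λ morphisms, all values D(d) are nearly λ-presentable, and the colimit of D exists, then colim D is nearly λ-presentable. -/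
universe w v u u₁ u₂

open CategoryTheory CategoryTheory.Limits Opposite

lemma NLP.smallSub_directed (κ : Cardinal.{w}) {I : Type w} (hκ : κ.IsRegular) :
    IsDirected (SmallSub κ I) (· ≤ ·) := by
  constructor
  intro J J'
  exact ⟨⟨J.1 ∪ J'.1, (Cardinal.mk_union_le _ _).trans_lt
    (Cardinal.add_lt_of_lt hκ.aleph0_le J.2 J'.2)⟩,
    Set.subset_union_left, Set.subset_union_right⟩


/-- A `κ`-small colimit of nearly `κ`-presentable objects is nearly
`κ`-presentable. -/
theorem NLP.stmt2 {C : Type u} [Category.{v} C] [HasCoproducts.{v} C]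
    (κ : Cardinal.{v}) (hκ : κ.IsRegular)
    {D : Type v} [SmallCategory D] (hsmall : Cardinal.mk (Arrow D) < κ)
    (F : D ⥤ C) [HasColimit F]
    (h : ∀ d : D, NearlyPresentable κ (F.obj d)) :
    NearlyPresentable κ (colimit F) := by
  intro I K
  haveI : IsDirected (SmallSub κ I) (· ≤ ·) := smallSub_directed κ hκ
  haveI : Nonempty (SmallSub κ I) :=
    ⟨⟨∅, by simpa using (hκ.aleph0_le.trans_lt' Cardinal.aleph0_pos)⟩⟩
  have hD : Cardinal.mk D < κ :=
    lt_of_le_of_lt (Cardinal.mk_le_of_injective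
      (f := fun d : D => Arrow.mk (𝟙 d)) (fun a b hab => congrArg Comma.left hab)) hsmall
  have ht := fun d => (h d K).some
  have pushι : ∀ {A : C} {J J' : SmallSub κ I} (x : A ⟶ (subDiag (C := C) κ K).obj J)
      (h1 : J ⟶ J'),
      (x ≫ (subDiag (C := C) κ K).map h1) ≫ (subCocone (C := C) κ K).ι.app J'
        = x ≫ (subCocone (C := C) κ K).ι.app J := by
    intro A J J' x h1
    rw [Category.assoc, (subCocone (C := C) κ K).w h1]
  constructor
  apply Types.FilteredColimit.isColimitOf
  · -- surjectivity
    intro f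
    choose Jd gd hgd using fun d => Types.jointly_surjective _ (ht d) (colimit.ι F d ≫ f)
    have hgd' : ∀ d, gd d ≫ (subCocone (C := C) κ K).ι.app (Jd d) = colimit.ι F d ≫ f := by
      intro d; simpa using hgd d
    let J0 : SmallSub κ I := ⟨⋃ d, (Jd d).1,
      Cardinal.mk_iUnion_le_sum_mk.trans_lt
        (Cardinal.sum_lt_of_isRegular hκ hD (fun d => (Jd d).2))⟩
    have hJ0 : ∀ d, Jd d ≤ J0 := fun d => Set.subset_iUnion (fun d => (Jd d).1) d
    -- compatibility at some stage ≥ J0, per arrow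
    have compat : ∀ a : Arrow D, ∃ (k : SmallSub κ I) (fk : J0 ⟶ k),
        (F.map a.hom ≫ (gd a.right ≫ (subDiag (C := C) κ K).map (homOfLE (hJ0 a.right))))
            ≫ (subDiag (C := C) κ K).map fk
          = (gd a.left ≫ (subDiag (C := C) κ K).map (homOfLE (hJ0 a.left)))
            ≫ (subDiag (C := C) κ K).map fk := by
      intro a
      have hw : F.map a.hom ≫ colimit.ι F a.right = colimit.ι F a.left := colimit.w F a.hom
      have heq : ((coyoneda.obj (op (F.obj a.left))).mapCocone
            (subCocone (C := C) κ K)).ι.app J0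
            (F.map a.hom ≫ (gd a.right ≫ (subDiag (C := C) κ K).map (homOfLE (hJ0 a.right))))
          = ((coyoneda.obj (op (F.obj a.left))).mapCocone (subCocone (C := C) κ K)).ι.app J0
            (gd a.left ≫ (subDiag (C := C) κ K).map (homOfLE (hJ0 a.left))) := by
        simp only [Functor.mapCocone_ι_app, Functor.flip_obj_map, yoneda_map_app, TypeCat.hom_ofHom, TypeCat.Fun.coe_mk, types_comp_apply,
          Functor.const_obj_obj, Functor.mapCocone_pt, Functor.flip_obj_obj, yoneda_obj_obj]
        rw [Category.assoc, pushι, pushι, hgd', hgd', ← Category.assoc, hw]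
      obtain ⟨k, f1, f2, hk⟩ :=
        (Types.FilteredColimit.isColimit_eq_iff _ (ht a.left)).mp heq
      simp only [Functor.comp_map, Functor.flip_obj_map, yoneda_map_app, TypeCat.hom_ofHom, TypeCat.Fun.coe_mk] at hk
      rw [Subsingleton.elim f2 f1] at hk
      exact ⟨k, f1, hk⟩
    choose ka fka hcomp using compat
    let Jstar : SmallSub κ I := ⟨J0.1 ∪ ⋃ a : Arrow D, (ka a).1,
      (Cardinal.mk_union_le _ _).trans_lt (Cardinal.add_lt_of_lt hκ.aleph0_le J0.2
        (Cardinal.mk_iUnion_le_sum_mk.trans_lt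
          (Cardinal.sum_lt_of_isRegular hκ hsmall (fun a => (ka a).2))))⟩
    have hJstar : ∀ a : Arrow D, ka a ≤ Jstar := by
      intro a
      change (ka a).1 ⊆ J0.1 ∪ ⋃ a : Arrow D, (ka a).1
      exact (Set.subset_iUnion (fun a => (ka a).1) a).trans Set.subset_union_right
    have hJ0star : J0 ≤ Jstar := Set.subset_union_left
    let c : Cocone F :=
      { pt := (subDiag (C := C) κ K).obj Jstar
        ι :=
          { app := fun d => gd d ≫ (subDiag (C := C) κ K).map
              (homOfLE ((hJ0 d).trans hJ0star))
            naturality := by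
              intro d d' u
              dsimp only [Functor.const_obj_obj, Functor.const_obj_map]
              rw [Category.comp_id]
              have this := hcomp (Arrow.mk u)
              simp only [Arrow.mk_left, Arrow.mk_right, Arrow.mk_hom] at this
              have lhs : (gd d' ≫ (subDiag (C := C) κ K).map (homOfLE (hJ0 d')))
                  ≫ (subDiag (C := C) κ K).map (fka (Arrow.mk u))
                  ≫ (subDiag (C := C) κ K).map (homOfLE (hJstar (Arrow.mk u)))
                  = gd d' ≫ (subDiag (C := C) κ K).map (homOfLE ((hJ0 d').trans hJ0star)) := by
                rw [Category.assoc, ← Functor.map_comp, ← Functor.map_comp]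
                rfl
              have rhs : (gd d ≫ (subDiag (C := C) κ K).map (homOfLE (hJ0 d)))
                  ≫ (subDiag (C := C) κ K).map (fka (Arrow.mk u))
                  ≫ (subDiag (C := C) κ K).map (homOfLE (hJstar (Arrow.mk u)))
                  = gd d ≫ (subDiag (C := C) κ K).map (homOfLE ((hJ0 d).trans hJ0star)) := by
                rw [Category.assoc, ← Functor.map_comp, ← Functor.map_comp]
                rfl
              calc F.map u ≫ gd d' ≫ (subDiag (C := C) κ K).map
                    (homOfLE ((hJ0 d').trans hJ0star))
                  = F.map u ≫ (gd d' ≫ (subDiag (C := C) κ K).map (homOfLE (hJ0 d')))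
                    ≫ (subDiag (C := C) κ K).map (fka (Arrow.mk u))
                    ≫ (subDiag (C := C) κ K).map (homOfLE (hJstar (Arrow.mk u))) := by
                    rw [lhs]
                _ = ((F.map u ≫ (gd d' ≫ (subDiag (C := C) κ K).map (homOfLE (hJ0 d')))
                    ≫ (subDiag (C := C) κ K).map (fka (Arrow.mk u)))
                    ≫ (subDiag (C := C) κ K).map (homOfLE (hJstar (Arrow.mk u)))) := by
                    simp only [Category.assoc]
                _ = ((gd d ≫ (subDiag (C := C) κ K).map (homOfLE (hJ0 d)))
                    ≫ (subDiag (C := C) κ K).map (fka (Arrow.mk u)))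
                    ≫ (subDiag (C := C) κ K).map (homOfLE (hJstar (Arrow.mk u))) := by
                    congr 1
                    rw [← this]
                    simp only [Category.assoc]
                _ = gd d ≫ (subDiag (C := C) κ K).map (homOfLE ((hJ0 d).trans hJ0star)) := by
                    rw [Category.assoc]; exact rhs } }
    refine ⟨Jstar, colimit.desc F c, ?_⟩
    simp only [Functor.mapCocone_ι_app, Functor.flip_obj_map, yoneda_map_app, TypeCat.hom_ofHom, TypeCat.Fun.coe_mk, types_comp_apply,
      Functor.const_obj_obj, Functor.mapCocone_pt, Functor.flip_obj_obj, yoneda_obj_obj]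
    apply colimit.hom_ext
    intro d
    rw [← Category.assoc, colimit.ι_desc]
    show colimit.ι F d ≫ f = c.ι.app d ≫ (subCocone (C := C) κ K).ι.app Jstar
    show colimit.ι F d ≫ f = (gd d ≫ _) ≫ _
    rw [pushι, hgd']
  · -- injectivity
    intro Ji Jj gi gj heq
    simp only [Functor.mapCocone_ι_app, Functor.flip_obj_map, yoneda_map_app, TypeCat.hom_ofHom, TypeCat.Fun.coe_mk, types_comp_apply,
      Functor.const_obj_obj, Functor.mapCocone_pt, Functor.flip_obj_obj, yoneda_obj_obj] at heq
    have step : ∀ d : D, ∃ k : SmallSub κ I, ∃ (f1 : Ji ⟶ k) (f2 : Jj ⟶ k),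
        (colimit.ι F d ≫ gi) ≫ (subDiag (C := C) κ K).map f1
          = (colimit.ι F d ≫ gj) ≫ (subDiag (C := C) κ K).map f2 := by
      intro d
      have heqd : ((coyoneda.obj (op (F.obj d))).mapCocone
            (subCocone (C := C) κ K)).ι.app Ji (colimit.ι F d ≫ gi)
          = ((coyoneda.obj (op (F.obj d))).mapCocone
            (subCocone (C := C) κ K)).ι.app Jj (colimit.ι F d ≫ gj) := by
        simp only [Functor.mapCocone_ι_app, Functor.flip_obj_map, yoneda_map_app, TypeCat.hom_ofHom, TypeCat.Fun.coe_mk, types_comp_apply,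
          Functor.const_obj_obj, Functor.mapCocone_pt, Functor.flip_obj_obj, yoneda_obj_obj]
        rw [Category.assoc, Category.assoc, heq]
      obtain ⟨k, f1, f2, hk⟩ :=
        (Types.FilteredColimit.isColimit_eq_iff _ (ht d)).mp heqd
      simp only [Functor.comp_map, Functor.flip_obj_map, yoneda_map_app, TypeCat.hom_ofHom, TypeCat.Fun.coe_mk] at hk
      exact ⟨k, f1, f2, hk⟩
    choose kd f1 f2 hkd using step
    let kstar : SmallSub κ I := ⟨Ji.1 ∪ Jj.1 ∪ ⋃ d : D, (kd d).1,
      (Cardinal.mk_union_le _ _).trans_lt (Cardinal.add_lt_of_lt hκ.aleph0_le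
        ((Cardinal.mk_union_le _ _).trans_lt
          (Cardinal.add_lt_of_lt hκ.aleph0_le Ji.2 Jj.2))
        (Cardinal.mk_iUnion_le_sum_mk.trans_lt
          (Cardinal.sum_lt_of_isRegular hκ hD (fun d => (kd d).2))))⟩
    have hik : Ji ≤ kstar := by
      change Ji.1 ⊆ Ji.1 ∪ Jj.1 ∪ ⋃ d : D, (kd d).1
      exact Set.subset_union_left.trans Set.subset_union_left
    have hjk : Jj ≤ kstar := by
      change Jj.1 ⊆ Ji.1 ∪ Jj.1 ∪ ⋃ d : D, (kd d).1
      exact Set.subset_union_right.trans Set.subset_union_left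
    have hkk : ∀ d, kd d ≤ kstar := by
      intro d
      change (kd d).1 ⊆ Ji.1 ∪ Jj.1 ∪ ⋃ d : D, (kd d).1
      exact (Set.subset_iUnion (fun d => (kd d).1) d).trans Set.subset_union_right
    refine ⟨kstar, homOfLE hik, homOfLE hjk, ?_⟩
    simp only [Functor.comp_map, Functor.flip_obj_map, yoneda_map_app, TypeCat.hom_ofHom, TypeCat.Fun.coe_mk]
    apply colimit.hom_ext
    intro d
    rw [← Category.assoc, ← Category.assoc]
    have e1 : (homOfLE hik : Ji ⟶ kstar) = f1 d ≫ homOfLE (hkk d) := Subsingleton.elim _ _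
    have e2 : (homOfLE hjk : Jj ⟶ kstar) = f2 d ≫ homOfLE (hkk d) := Subsingleton.elim _ _
    rw [e1, e2, Functor.map_comp, Functor.map_comp, ← Category.assoc, ← Category.assoc,
      hkd d]
end

section
/- Let K be a category with coproducts in which all coproduct injections are monomorphisms, and let λ be a regular cardinal. If g : A → B is a strong epimorphism in K and A is nearly λ-presentable, then B is nearly λ-presentable. -/
universe w v u u₁ u₂

open CategoryTheory CategoryTheory.Limits Opposite

namespace NLP

section AuxStmt3

variable {C : Type u} [Category.{v} C] [HasCoproducts.{v} C]

lemma map_comp_subInj (κ : Cardinal.{v}) {I : Type v} (K : I → C)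
    {J J' : SmallSub κ I} (h : J ⟶ J') :
    (subDiag (C := C) κ K).map h ≫ subInj κ K J' = subInj κ K J := by
  dsimp [subDiag, subInj]
  ext j
  simp

lemma subInj_mono (hmono : ∀ {I : Type v} (K : I → C) (i : I), Mono (Sigma.ι K i))
    (κ : Cardinal.{v}) {I : Type v} (K : I → C) (J : SmallSub κ I) :
    Mono (subInj (C := C) κ K J) := by
  let L : ULift.{v} Bool → C := fun b =>
    bif b.down then ∐ (fun j : J.1 => K j) else ∐ (fun j : (J.1ᶜ : Set I) => K j)
  haveI : ∀ i : I, Decidable (i ∈ J.1) := fun i => Classical.dec _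
  let ψ : (∐ K) ⟶ ∐ L := Sigma.desc (fun i =>
    if h : i ∈ J.1 then (Sigma.ι (fun j : J.1 => K j) ⟨i, h⟩ : _) ≫ Sigma.ι L ⟨true⟩
    else (Sigma.ι (fun j : (J.1ᶜ : Set I) => K j) ⟨i, h⟩ : _) ≫ Sigma.ι L ⟨false⟩)
  have h : subInj (C := C) κ K J ≫ ψ = Sigma.ι L ⟨true⟩ := by
    dsimp [subInj, ψ]
    ext j
    obtain ⟨j, hj⟩ := j
    simp [dif_pos hj]
  have hm : Mono (subInj (C := C) κ K J ≫ ψ) := by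
    rw [h]; exact hmono L ⟨true⟩
  exact mono_of_mono _ ψ

end AuxStmt3

end NLP

/-- In a category with coproducts in which all coproduct injections are
monomorphisms, a strong quotient of a nearly `κ`-presentable object is nearly
`κ`-presentable. -/
theorem NLP.stmt3 {C : Type u} [Category.{v} C] [HasCoproducts.{v} C]
    (hmono : ∀ {I : Type v} (K : I → C) (i : I), Mono (Sigma.ι K i))
    (κ : Cardinal.{v}) (hκ : κ.IsRegular)
    {A B : C} (g : A ⟶ B) (hg : StrongEpi g)
    (hA : NearlyPresentable κ A) :
    NearlyPresentable κ B := by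
  intro I K
  obtain ⟨hcA⟩ := hA K
  haveI := hg
  have monoJ : ∀ J : SmallSub κ I, Mono (subInj (C := C) κ K J) :=
    subInj_mono hmono κ K
  have hfact : ∀ f : B ⟶ ∐ K, ∃ (J : SmallSub κ I)
      (t : B ⟶ ∐ fun j : J.1 => K j), t ≫ subInj κ K J = f := by
    intro f
    obtain ⟨J, u, hu⟩ := Types.jointly_surjective _ hcA (g ≫ f)
    have hu' : u ≫ subInj κ K J = g ≫ f := hu
    haveI := monoJ J
    have sq : CommSq u g (subInj κ K J) f := ⟨hu'⟩
    have hl := (hg.llp (subInj κ K J)).sq_hasLift sq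
    exact ⟨J, hl.exists_lift.some.l, hl.exists_lift.some.fac_right⟩
  set F := subDiag (C := C) κ K ⋙ coyoneda.obj (op B) with hF
  have wd : ∀ (s : Cocone F) (J J' : SmallSub κ I)
      (t : B ⟶ ∐ fun j : J.1 => K j) (t' : B ⟶ ∐ fun j : J'.1 => K j),
      t ≫ subInj κ K J = t' ≫ subInj κ K J' → s.ι.app J t = s.ι.app J' t' := by
    intro s J J' t t' h
    have hcard : Cardinal.mk ↥(J.1 ∪ J'.1) < κ :=
      lt_of_le_of_lt (Cardinal.mk_union_le _ _)
        (Cardinal.add_lt_of_lt hκ.aleph0_le J.2 J'.2)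
    set J'' : SmallSub κ I := ⟨J.1 ∪ J'.1, hcard⟩ with hJ''
    have h1 : J ⟶ J'' := homOfLE (Set.subset_union_left)
    have h2 : J' ⟶ J'' := homOfLE (Set.subset_union_right)
    have e1 : s.ι.app J'' (F.map h1 t) = s.ι.app J t := ConcreteCategory.congr_hom (s.w h1) t
    have e2 : s.ι.app J'' (F.map h2 t') = s.ι.app J' t' := ConcreteCategory.congr_hom (s.w h2) t'
    have key : F.map h1 t = F.map h2 t' := by
      have m1 : F.map h1 t = t ≫ (subDiag (C := C) κ K).map h1 := rfl
      have m2 : F.map h2 t' = t' ≫ (subDiag (C := C) κ K).map h2 := rfl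
      haveI := monoJ J''
      rw [m1, m2]
      apply (cancel_mono (subInj κ K J'')).1
      exact (Category.assoc _ _ _).trans (((congrArg (fun x => t ≫ x) (map_comp_subInj κ K h1)).trans h).trans
        ((congrArg (fun x => t' ≫ x) (map_comp_subInj κ K h2)).symm.trans (Category.assoc _ _ _).symm))
    rw [← e1, ← e2, key]
  refine ⟨⟨?_, ?_, ?_⟩⟩
  · intro s
    exact TypeCat.ofHom fun f => s.ι.app (hfact f).choose (hfact f).choose_spec.choose
  · intro s J
    ext t
    exact wd s _ J _ t (by
      refine (hfact _).choose_spec.choose_spec.trans ?_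
      rfl)
  · intro s m hm
    ext f
    dsimp
    have : f = (((coyoneda.obj (op B)).mapCocone (subCocone κ K)).ι.app
        (hfact f).choose) (hfact f).choose_spec.choose := by
      rw [show (((coyoneda.obj (op B)).mapCocone (subCocone κ K)).ι.app
        (hfact f).choose) (hfact f).choose_spec.choose =
        (hfact f).choose_spec.choose ≫ subInj κ K (hfact f).choose from rfl,
        (hfact f).choose_spec.choose_spec]
    have h2 := ConcreteCategory.congr_hom (hm (hfact f).choose) (hfact f).choose_spec.choose
    exact (congrArg m this).trans h2
end

section
/- Every nearly locally λ-presentable category with regular factorizations has monomorphisms stable under λ-directed colimits; that is, for every λ-directed set (K_i)_{i∈I} of subobjects of an object K, the morphism colim_{i∈I} K_i → K induced by the subobject inclusions is a monomorphism. -/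
universe w v u u₁ u₂

open CategoryTheory CategoryTheory.Limits Opposite

/-- Every nearly locally `κ`-presentable category with regular
factorizations has monomorphisms stable under `κ`-directed colimits: for every
`κ`-directed diagram of subobjects of `X` (a diagram `F` over a `κ`-directed poset
together with a cocone with vertex `X` all of whose legs are monomorphisms), the
induced morphism `colim F ⟶ X` is a monomorphism. -/
theorem NLP.stmt6 {C : Type u} [Category.{v} C] (κ : Cardinal.{v})
    (h : IsNearlyLocallyPresentable κ C) (hreg : HasRegularFactorizations C)
    {J : Type v} [PartialOrder J] (hJ : IsCardinalDirected κ J)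
    (F : J ⥤ C) (c : Cocone F) (hmono : ∀ j : J, Mono (c.ι.app j)) :
    haveI := h.cocomplete
    Mono (colimit.desc F c) := by
  haveI := h.cocomplete
  haveI hascop : HasCoproducts.{v} C := fun _ => inferInstance
  obtain ⟨S, hgen, hnp⟩ := h.exists_gen
  set K : J → C := F.obj with hK
  set p : (∐ K) ⟶ c.pt := Sigma.desc (fun j => c.ι.app j) with hp
  set q : (∐ K) ⟶ colimit F := Sigma.desc (fun j => colimit.ι F j) with hq
  obtain ⟨M, e, n, ⟨re⟩, hn, hen⟩ := hreg p
  haveI := hn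
  haveI := re
  haveI : Epi e := RegularEpi.epi e re
  -- the comparison cocone with vertex M
  have hnat : ∀ {i i' : J} (f : i ⟶ i'),
      F.map f ≫ (Sigma.ι K i' ≫ e) = Sigma.ι K i ≫ e := by
    intro i i' f
    rw [← cancel_mono n]
    simp only [Category.assoc, hen, hp]
    simp
  let c' : Cocone F :=
    { pt := M
      ι := { app := fun j => Sigma.ι K j ≫ e
             naturality := by
               intro i i' f
               exact (hnat f).trans (Category.comp_id _).symm } }
  let t : colimit F ⟶ M := colimit.desc F c'
  -- key: nearly presentable generators cannot distinguish p and q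
  have key : ∀ (A : C), A ∈ S → ∀ (f g : A ⟶ ∐ K), f ≫ p = g ≫ p → f ≫ q = g ≫ q := by
    intro A hA f g hfg
    obtain ⟨hcA⟩ := hnp A hA K
    obtain ⟨J₁, f₁, hf₁⟩ := Types.jointly_surjective _ hcA f
    obtain ⟨J₂, g₁, hg₁⟩ := Types.jointly_surjective _ hcA g
    have hJu : Cardinal.mk ↥(J₁.1 ∪ J₂.1) < κ :=
      lt_of_le_of_lt (Cardinal.mk_union_le _ _)
        (Cardinal.add_lt_of_lt h.isRegular.aleph0_le J₁.2 J₂.2)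
    let J₀ : SmallSub κ J := ⟨J₁.1 ∪ J₂.1, hJu⟩
    let m₁ : J₁ ⟶ J₀ := homOfLE (Set.subset_union_left)
    let m₂ : J₂ ⟶ J₀ := homOfLE (Set.subset_union_right)
    let f₂ : A ⟶ (subDiag (C := C) κ K).obj J₀ := f₁ ≫ (subDiag (C := C) κ K).map m₁
    let g₂ : A ⟶ (subDiag (C := C) κ K).obj J₀ := g₁ ≫ (subDiag (C := C) κ K).map m₂
    have hf₂ : f₂ ≫ (subCocone (C := C) κ K).ι.app J₀ = f := by
      rw [Category.assoc, (subCocone (C := C) κ K).w m₁]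
      exact hf₁
    have hg₂ : g₂ ≫ (subCocone (C := C) κ K).ι.app J₀ = g := by
      rw [Category.assoc, (subCocone (C := C) κ K).w m₂]
      exact hg₁
    obtain ⟨i₀, hi₀⟩ := hJ J₀.1 J₀.2
    let d : (subDiag (C := C) κ K).obj J₀ ⟶ K i₀ :=
      Sigma.desc (fun j => F.map (homOfLE (hi₀ j.1 j.2)))
    have hdq : (subCocone (C := C) κ K).ι.app J₀ ≫ q = d ≫ colimit.ι F i₀ := by
      dsimp only [subCocone, subDiag]
      ext j
      simp [d, hq]
    have hdp : (subCocone (C := C) κ K).ι.app J₀ ≫ p = d ≫ c.ι.app i₀ := by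
      dsimp only [subCocone, subDiag]
      ext j
      simp [d, hp]
    have h5 : f₂ ≫ d = g₂ ≫ d := by
      haveI := hmono i₀
      rw [← cancel_mono (c.ι.app i₀)]
      have e1 : (f₂ ≫ d) ≫ c.ι.app i₀ = f ≫ p := by
        rw [Category.assoc, ← hdp]
        exact (Category.assoc _ _ _).symm.trans (congrArg (· ≫ p) hf₂)
      have e2 : (g₂ ≫ d) ≫ c.ι.app i₀ = g ≫ p := by
        rw [Category.assoc, ← hdp]
        exact (Category.assoc _ _ _).symm.trans (congrArg (· ≫ p) hg₂)
      rw [e1, e2]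
      exact hfg
    calc f ≫ q = f₂ ≫ (subCocone (C := C) κ K).ι.app J₀ ≫ q := by
          exact (congrArg (· ≫ q) hf₂).symm.trans (Category.assoc _ _ _)
      _ = (f₂ ≫ d) ≫ colimit.ι F i₀ := by rw [hdq]; simp only [Category.assoc]
      _ = (g₂ ≫ d) ≫ colimit.ι F i₀ := by rw [h5]
      _ = g₂ ≫ (subCocone (C := C) κ K).ι.app J₀ ≫ q := by rw [hdq]; simp only [Category.assoc]
      _ = g ≫ q := (Category.assoc _ _ _).symm.trans (congrArg (· ≫ q) hg₂)
  -- the coequalizer pair of e is equalized by q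
  have hwp : re.left ≫ p = re.right ≫ p := by
    rw [← hen, ← Category.assoc, re.w, Category.assoc]
  have huv : re.left ≫ q = re.right ≫ q := by
    haveI := hgen.faithful
    apply (restrictedYoneda S).map_injective
    apply NatTrans.ext
    funext A
    ext x
    obtain ⟨⟨A, hA⟩⟩ := A
    show x ≫ (re.left ≫ q) = x ≫ (re.right ≫ q)
    refine (Category.assoc _ _ _).symm.trans (Eq.trans ?_ (Category.assoc _ _ _))
    exact key A hA (x ≫ re.left) (x ≫ re.right)
      ((Category.assoc _ _ _).trans ((congrArg (fun y => CategoryStruct.comp (X := A) x y) hwp).trans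
        (Category.assoc _ _ _).symm))
  obtain ⟨s, hs₀⟩ := Cofork.IsColimit.desc' re.isColimit q huv
  have hs : e ≫ s = q := hs₀
  have hqt : q ≫ t = e := by
    apply Sigma.hom_ext
    intro j
    rw [← Category.assoc]
    have : Sigma.ι K j ≫ q = colimit.ι F j := by simp [hq]
    rw [this]
    simp [t, c']
  have hst : s ≫ t = 𝟙 M := by
    rw [← cancel_epi e, ← Category.assoc, hs, hqt, Category.comp_id]
  have hts : t ≫ s = 𝟙 (colimit F) := by
    apply colimit.hom_ext
    intro j
    rw [← Category.assoc]
    have h1 : colimit.ι F j ≫ t = Sigma.ι K j ≫ e := by simp [t, c']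
    rw [h1, Category.comp_id, Category.assoc, hs]
    simp [hq]
  haveI : IsIso t := ⟨s, hts, hst⟩
  have htn : t ≫ n = colimit.desc F c := by
    apply colimit.hom_ext
    intro j
    have h1 : colimit.ι F j ≫ t = Sigma.ι K j ≫ e := by simp [t, c']
    rw [← Category.assoc, h1, Category.assoc, hen]
    simp [hp]
  rw [← htn]
  exact mono_comp t n
end

section
/- Every nearly locally presentable category with regular factorizations is bounded, i.e., it has a small dense full subcategory. -/
universe w v u u₁ u₂

open CategoryTheory CategoryTheory.Limits Opposite

/-- Every nearly locally presentable category with regular factorizations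
is bounded, i.e. it has a small dense full subcategory. -/
theorem NLP.stmt7 {C : Type u} [Category.{v} C]
    (h : ∃ κ : Cardinal.{v}, IsNearlyLocallyPresentable κ C)
    (hreg : HasRegularFactorizations C) :
    ∃ S : Set C, Small.{v} S ∧ IsDenseSub S := by
  classical
  obtain ⟨κ, hNLP⟩ := h
  obtain ⟨hκreg, hcolim, -, hgen⟩ := hNLP
  haveI := hcolim
  haveI hCopr : HasCoproducts.{v} C := fun _ => inferInstance
  obtain ⟨S₀, hsg, hnp⟩ := hgen
  haveI hsmall : Small.{v} ↥S₀ := hsg.small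
  haveI hfa := hsg.faithful
  haveI hri := hsg.reflectsIsos
  let ob : Shrink ↥S₀ → C := fun b => ((equivShrink ↥S₀).symm b).1
  have hob : ∀ b, ob b ∈ S₀ := fun b => ((equivShrink ↥S₀).symm b).2
  have hob2 : ∀ s : ↥S₀, ob (equivShrink ↥S₀ s) = s.1 :=
    fun s => congrArg Subtype.val ((equivShrink ↥S₀).symm_apply_apply s)
  let U : Type v := κ.ord.ToType
  have hU : Cardinal.mk U = κ := Cardinal.mk_ord_toType κ
  let Cop : Set C :=
    {X | ∃ P : Set (U × Shrink ↥S₀), Cardinal.mk ↥P < κ ∧ X = ∐ (fun p : ↥P => ob p.1.2)}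
  let S : Set C := S₀ ∪ Cop
  have main : ∀ (K K' : C) (η : (restrictedYoneda S).obj K ⟶ (restrictedYoneda S).obj K'),
      ∃ f : K ⟶ K', ∀ (B : C) (hB : B ∈ S) (g : B ⟶ K),
        g ≫ f = η.app (op ⟨B, hB⟩) g := by
    intro K K' η
    have nat : ∀ {B B' : C} (hB : B ∈ S) (hB' : B' ∈ S) (φ : B ⟶ B') (g : B' ⟶ K),
        η.app (op ⟨B, hB⟩) (φ ≫ g) = φ ≫ η.app (op ⟨B', hB'⟩) g := by
      intro B B' hB hB' φ g
      exact types_congr_hom (η.naturality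
        (Quiver.Hom.op (show (⟨B, hB⟩ : ObjectProperty.FullSubcategory (· ∈ S)) ⟶ ⟨B', hB'⟩ from ObjectProperty.homMk φ))) g
    let I : Type v := (b : Shrink ↥S₀) × (ob b ⟶ K)
    let fam : I → C := fun i => ob i.1
    let eK : (∐ fam) ⟶ K := Sigma.desc fun i => i.2
    let g' : (∐ fam) ⟶ K' := Sigma.desc fun i =>
      η.app (op ⟨ob i.1, Set.subset_union_left (hob i.1)⟩) i.2
    have claim : ∀ (B : C) (hB : B ∈ S₀) (x : B ⟶ ∐ fam),
        x ≫ g' = η.app (op ⟨B, Set.subset_union_left hB⟩) (x ≫ eK) := by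
      intro B hB x
      obtain ⟨hcB⟩ := hnp B hB fam
      obtain ⟨J, w, hw⟩ := Types.jointly_surjective _ hcB x
      change B ⟶ (∐ fun j : ↥J.1 => fam ↑j) at w
      have hw' : w ≫ (Sigma.desc fun j : ↥J.1 => Sigma.ι fam ↑j) = x := hw
      obtain ⟨u⟩ : Nonempty (↥J.1 ↪ U) := by
        rw [← Cardinal.le_def, hU]; exact J.2.le
      let fP : ↥J.1 → U × Shrink ↥S₀ := fun j => (u j, (↑j : I).1)
      have hfP : Function.Injective fP := fun a b hab => u.injective (congrArg Prod.fst hab)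
      let P : Set (U × Shrink ↥S₀) := Set.range fP
      have hPκ : Cardinal.mk ↥P < κ := by
        rw [show P = Set.range fP from rfl, Cardinal.mk_range_eq _ hfP]; exact J.2
      have hCP : (∐ fun p : ↥P => ob p.1.2) ∈ S := Or.inr ⟨P, hPκ, rfl⟩
      let jof : ↥P → ↥J.1 := fun p => p.2.choose
      have hjof : ∀ p : ↥P, fP (jof p) = ↑p := fun p => p.2.choose_spec
      have hkeq : ∀ p : ↥P, ob (↑p : U × Shrink ↥S₀).2 = fam ↑(jof p) := fun p => by
        rw [← hjof p]
      let hk : ∀ p : ↥P, ob (↑p : U × Shrink ↥S₀).2 ⟶ K :=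
        fun p => eqToHom (hkeq p) ≫ (↑(jof p) : I).2
      let θh : (∐ fun j : ↥J.1 => fam ↑j) ⟶ ∐ fun p : ↥P => ob p.1.2 :=
        Sigma.desc fun j => Sigma.ι (fun p : ↥P => ob p.1.2) ⟨fP j, Set.mem_range_self j⟩
      let ψ2 : (∐ fun p : ↥P => ob p.1.2) ⟶ K := Sigma.desc hk
      let ψ : (∐ fun p : ↥P => ob p.1.2) ⟶ K' := Sigma.desc fun p =>
        η.app (op ⟨ob p.1.2, Set.subset_union_left (hob _)⟩) (hk p)
      have hjj : ∀ j : ↥J.1, jof ⟨fP j, Set.mem_range_self j⟩ = j := fun j => hfP (hjof _)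
      have hθψ2 : θh ≫ ψ2 = (Sigma.desc fun j : ↥J.1 => Sigma.ι fam ↑j) ≫ eK := by
        apply Sigma.hom_ext; intro j
        have hj := hjj j
        simp only [θh, ψ2, eK, hk, ← Category.assoc]
        simp only [Sigma.ι_desc]
        have key : ∀ (a : ↥J.1) (e : ob (fP j).2 = fam ↑a), a = j →
            eqToHom e ≫ (↑a : I).snd = (↑j : I).snd := by
          rintro a e rfl
          exact Category.id_comp _
        exact key _ _ (hjj j)
      have hθψ : θh ≫ ψ = (Sigma.desc fun j : ↥J.1 => Sigma.ι fam ↑j) ≫ g' := by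
        apply Sigma.hom_ext; intro j
        have hj := hjj j
        simp only [θh, ψ, g', hk, ← Category.assoc]
        erw [Sigma.ι_desc, Sigma.ι_desc]
        have key : ∀ (a : ↥J.1) (e : ob (fP j).2 = fam ↑a), a = j →
            eqToHom e ≫ (↑a : I).snd = (↑j : I).snd := by
          rintro a e rfl
          exact Category.id_comp _
        rw [key _ _ (hjj j)]
        erw [Sigma.ι_desc, Sigma.ι_desc]
      have hψη : ψ = η.app (op ⟨∐ fun p : ↥P => ob p.1.2, hCP⟩) ψ2 := by
        apply Sigma.hom_ext; intro p
        rw [show Sigma.ι (fun p : ↥P => ob p.1.2) p ≫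
            η.app (op ⟨∐ fun p : ↥P => ob p.1.2, hCP⟩) ψ2 =
            η.app (op ⟨ob p.1.2, Set.subset_union_left (hob _)⟩)
              (Sigma.ι (fun p : ↥P => ob p.1.2) p ≫ ψ2) from
          (nat (Set.subset_union_left (hob _)) hCP _ ψ2).symm]
        simp only [ψ, ψ2, Sigma.ι_desc]
        exact Sigma.ι_desc _ _
      have hx2 : (w ≫ θh) ≫ ψ2 = x ≫ eK := by
        rw [Category.assoc, hθψ2, ← Category.assoc, hw']
      calc x ≫ g'
          = (w ≫ Sigma.desc fun j : ↥J.1 => Sigma.ι fam ↑j) ≫ g' := by rw [hw']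
        _ = w ≫ θh ≫ ψ := by rw [Category.assoc, ← hθψ]
        _ = (w ≫ θh) ≫ η.app (op ⟨∐ fun p : ↥P => ob p.1.2, hCP⟩) ψ2 := by
            rw [hψη]; exact (Category.assoc _ _ _).symm
        _ = (show B ⟶ K' from η.app (op ⟨B, Set.subset_union_left hB⟩) ((w ≫ θh) ≫ ψ2)) :=
            by exact (nat (Set.subset_union_left hB) hCP (w ≫ θh) ψ2).symm
        _ = (show B ⟶ K' from η.app (op ⟨B, Set.subset_union_left hB⟩) (x ≫ eK)) := by rw [hx2]
    obtain ⟨Z, e, m, ⟨re⟩, hm, hfac⟩ := hreg eK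
    haveI := hm
    haveI hmiso : IsIso m := by
      haveI : ∀ (X : (ObjectProperty.FullSubcategory (· ∈ S₀))ᵒᵖ),
          IsIso (((restrictedYoneda S₀).map m).app X) := by
        intro X
        rw [isIso_iff_bijective]
        constructor
        · intro a b hab
          exact (cancel_mono m).1 hab
        · intro a
          change X.unop.obj ⟶ K at a
          have hb : ob (equivShrink ↥S₀ ⟨X.unop.obj, X.unop.property⟩) = X.unop.obj :=
            hob2 ⟨X.unop.obj, X.unop.property⟩
          let xi : fam ⟨equivShrink ↥S₀ ⟨X.unop.obj, X.unop.property⟩, eqToHom hb ≫ a⟩ ⟶ ∐ fam :=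
            Sigma.ι fam ⟨equivShrink ↥S₀ ⟨X.unop.obj, X.unop.property⟩, eqToHom hb ≫ a⟩
          refine ⟨eqToHom hb.symm ≫ xi ≫ e, ?_⟩
          show (eqToHom hb.symm ≫ xi ≫ e) ≫ m = a
          rw [Category.assoc, Category.assoc, hfac]
          simp [xi, eK]
      haveI : IsIso ((restrictedYoneda S₀).map m) := NatIso.isIso_of_isIso_app _
      exact isIso_of_reflects_iso m (restrictedYoneda S₀)
    have hlr : re.left ≫ eK = re.right ≫ eK := by
      rw [← hfac, ← Category.assoc, ← Category.assoc, re.w]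
    have hcoeq : re.left ≫ g' = re.right ≫ g' := by
      apply hfa.map_injective
      apply NatTrans.ext
      funext X
      refine ConcreteCategory.hom_ext _ _ fun (h : X.unop.obj ⟶ re.W) => ?_
      have h1 := claim X.unop.obj X.unop.property (h ≫ re.left)
      have h2 := claim X.unop.obj X.unop.property (h ≫ re.right)
      have he : (h ≫ re.left) ≫ eK = (h ≫ re.right) ≫ eK := by
        rw [Category.assoc, Category.assoc, hlr]
      show h ≫ re.left ≫ g' = h ≫ re.right ≫ g'
      rw [← Category.assoc, ← Category.assoc, h1, h2, he]
    let f0 : Z ⟶ K' := Cofork.IsColimit.desc re.isColimit g' hcoeq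
    have hf0 : e ≫ f0 = g' := by
      simpa using Cofork.IsColimit.π_desc' re.isColimit g' hcoeq
    have heKf : eK ≫ (inv m ≫ f0) = g' := by
      rw [← hfac, Category.assoc, IsIso.hom_inv_id_assoc, hf0]
    have base : ∀ (B : C) (hB0 : B ∈ S₀) (g : B ⟶ K),
        g ≫ (inv m ≫ f0) = η.app (op ⟨B, Set.subset_union_left hB0⟩) g := by
      intro B hB0 g
      have hb : ob (equivShrink ↥S₀ ⟨B, hB0⟩) = B := hob2 ⟨B, hB0⟩
      have hx : (eqToHom hb.symm ≫
          Sigma.ι fam ⟨equivShrink ↥S₀ ⟨B, hB0⟩, eqToHom hb ≫ g⟩) ≫ eK = g := by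
        simp [eK]
      calc g ≫ (inv m ≫ f0)
          = ((eqToHom hb.symm ≫
              Sigma.ι fam ⟨equivShrink ↥S₀ ⟨B, hB0⟩, eqToHom hb ≫ g⟩) ≫ eK) ≫
              (inv m ≫ f0) := by rw [hx]
        _ = (eqToHom hb.symm ≫
              Sigma.ι fam ⟨equivShrink ↥S₀ ⟨B, hB0⟩, eqToHom hb ≫ g⟩) ≫ g' := by
            rw [Category.assoc, heKf]
        _ = (show B ⟶ K' from η.app (op ⟨B, Set.subset_union_left hB0⟩)
              ((eqToHom hb.symm ≫
                Sigma.ι fam ⟨equivShrink ↥S₀ ⟨B, hB0⟩, eqToHom hb ≫ g⟩) ≫ eK)) :=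
            by exact claim B hB0 _
        _ = (show B ⟶ K' from η.app (op ⟨B, Set.subset_union_left hB0⟩) g) := by rw [hx]
    refine ⟨inv m ≫ f0, ?_⟩
    intro B hB g
    rcases id hB with hB0 | hBc
    · exact base B hB0 g
    · obtain ⟨P, hPκ, rfl⟩ := hBc
      apply Sigma.hom_ext; intro p
      rw [← Category.assoc, base _ (hob _) _]
      exact nat (Set.subset_union_left (hob _)) hB _ g
  refine ⟨S, ?_, ?_, ?_⟩
  · haveI : Small.{v} ↥Cop := small_subset
      (s := Set.range fun P : Set (U × Shrink ↥S₀) => ∐ fun p : ↥P => ob p.1.2)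
      (fun X hX => by obtain ⟨P, _, rfl⟩ := hX; exact Set.mem_range_self P)
    exact small_union S₀ Cop
  · refine ⟨fun {K K'} η => ?_⟩
    obtain ⟨f, hf⟩ := main K K' η
    exact ⟨f, NatTrans.ext (funext fun X => ConcreteCategory.hom_ext _ _ fun g => hf X.unop.obj X.unop.property g)⟩
  · constructor
    intro K K' f g hfg
    apply hfa.map_injective
    apply NatTrans.ext
    funext X
    refine ConcreteCategory.hom_ext _ _ fun (h : X.unop.obj ⟶ K) => ?_
    exact types_congr_hom (congrArg
      (fun (θ : (restrictedYoneda S).obj K ⟶ (restrictedYoneda S).obj K') =>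
        θ.app (op ⟨X.unop.obj, Set.subset_union_left X.unop.property⟩)) hfg) h
end

section
/- Every nearly locally presentable abelian category is locally presentable. -/
universe w v u u₁ u₂

open CategoryTheory CategoryTheory.Limits Opposite

namespace NLP

variable {C : Type u} [Category.{v} C]

section Work

open Cardinal

variable {C : Type u} [Category.{v} C] [Abelian C] [HasColimitsOfSize.{v, v} C]

/-- Factorization of morphisms into coproducts through small subcoproducts,
from near presentability. -/
lemma NearlyPresentable.exists_factor {κ : Cardinal.{v}} {A : C}
    (hA : NearlyPresentable κ A) {I : Type v} (K : I → C) (f : A ⟶ ∐ K) :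
    ∃ (Js : SmallSub κ I) (g : A ⟶ ∐ fun j : Js.1 => K j), g ≫ subInj κ K Js = f := by
  obtain ⟨hc⟩ := hA K
  obtain ⟨Js, g, hg⟩ := Types.jointly_surjective _ hc f
  exact ⟨Js, g, hg⟩

/-- A jointly epimorphic family indexed by all maps from generators. -/
lemma epi_desc_of_gen {S' : Type v} {G : S' → C}
    (hG : ∀ {X Y : C} (s t : X ⟶ Y), (∀ (a : S') (f : G a ⟶ X), f ≫ s = f ≫ t) → s = t)
    (X : C) : Epi (Sigma.desc (fun e : Σ a : S', (G a ⟶ X) => e.2)) := by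
  constructor
  intro Z s t hst
  apply hG
  intro a f
  have := congrArg (fun u => Sigma.ι (fun e : Σ a : S', (G a ⟶ X) => G e.1) ⟨a, f⟩ ≫ u) hst
  simpa using this

/-- Weakly co-wellpowered abelian categories are wellpowered. -/
lemma small_subobject_of_wcwp (hw : WeaklyCoWellPowered C) (X : C) :
    Small.{v} (Subobject X) := by
  obtain ⟨ι, Z, p, hst, huniv⟩ := hw X
  apply small_of_surjective (f := fun i : ι => kernelSubobject (p i))
  intro N
  haveI : StrongEpi (cokernel.π N.arrow) := strongEpi_of_epi _
  obtain ⟨i, e, hi⟩ := huniv _ (cokernel.π N.arrow) this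
  refine ⟨i, ?_⟩
  show kernelSubobject (p i) = N
  have hp : p i = cokernel.π N.arrow ≫ e.inv := by rw [← hi]; simp
  simp only [hp, kernelSubobject_comp_mono]
  have : (asIso (Abelian.factorThruImage N.arrow)).symm.hom ≫ N.arrow
      = kernel.ι (cokernel.π N.arrow) := by
    simp only [Iso.symm_hom, asIso_inv]
    rw [IsIso.inv_comp_eq]
    exact (Abelian.image.fac N.arrow).symm
  calc kernelSubobject (cokernel.π N.arrow)
      = Subobject.mk (kernel.ι (cokernel.π N.arrow)) := rfl
    _ = Subobject.mk N.arrow :=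
        Subobject.mk_eq_mk_of_comm _ _ (asIso (Abelian.factorThruImage N.arrow)).symm this
    _ = N := Subobject.mk_arrow N


/-- In a wellpowered abelian category, any jointly-epimorphic family over `X` with
`#(Subobject X) < ρ` (ρ regular) contains a jointly-epimorphic subfamily of size `< ρ`. -/
lemma exists_small_cover {ρ : Cardinal.{v}} (hρ : ρ.IsRegular)
    {X : C} [Small.{v} (Subobject X)]
    (hX : #(Shrink.{v} (Subobject X)) < ρ)
    {E : Type v} {B : E → C} (b : ∀ e, B e ⟶ X)
    (hepi : Epi (Sigma.desc b)) :
    ∃ γ : Set E, #γ < ρ ∧ Epi (Sigma.desc (fun e : γ => b e.1)) := by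
  classical
  let D : Set E → Subobject X := fun γ => imageSubobject (Sigma.desc (fun e : γ => b e.1))
  have hmono : ∀ {γ γ' : Set E}, γ ⊆ γ' → D γ ≤ D γ' := by
    intro γ γ' h
    refine imageSubobject_le _
      (Sigma.desc (fun e : γ => Sigma.ι (fun e' : γ' => B e'.1) ⟨e.1, h e.2⟩)
        ≫ factorThruImageSubobject _) ?_
    rw [Category.assoc, imageSubobject_arrow_comp]
    ext e
    simp
  let rep : Subobject X → Set E := fun T =>
    if h : ∃ γ : Set E, #γ < ρ ∧ D γ = T then h.choose else ∅
  have hrep1 : ∀ T, #(rep T) < ρ := by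
    intro T
    by_cases h : ∃ γ : Set E, #γ < ρ ∧ D γ = T
    · simpa only [rep, dif_pos h] using h.choose_spec.1
    · simp only [rep, dif_neg h, Cardinal.mk_emptyCollection]
      exact lt_of_lt_of_le Cardinal.aleph0_pos hρ.aleph0_le
  have hrep2 : ∀ T, (∃ γ : Set E, #γ < ρ ∧ D γ = T) → D (rep T) = T := by
    intro T h
    simpa only [rep, dif_pos h] using h.choose_spec.2
  let γstar : Set E := ⋃ t : Shrink.{v} (Subobject X), rep ((equivShrink (Subobject X)).symm t)
  have hcard : #γstar < ρ := by
    refine lt_of_le_of_lt (Cardinal.mk_iUnion_le _) ?_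
    refine Cardinal.mul_lt_of_lt hρ.aleph0_le hX ?_
    refine Ordinal.iSup_lt (by rw [hρ.cof_eq]; exact hX) ?_
    intro t
    exact hrep1 _
  have hsingleton : ∀ e : E, #(({e} : Set E)) < ρ := by
    intro e
    rw [Cardinal.mk_singleton]
    exact lt_of_lt_of_le Cardinal.one_lt_aleph0 hρ.aleph0_le
  have hle : ∀ e : E, D {e} ≤ D γstar := by
    intro e
    have h : ∃ γ : Set E, #γ < ρ ∧ D γ = D {e} := ⟨{e}, hsingleton e, rfl⟩
    have hsub : rep (D {e}) ⊆ γstar := by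
      intro x hx
      exact Set.mem_iUnion.2 ⟨equivShrink (Subobject X) (D {e}), by
        simpa only [Equiv.symm_apply_apply] using hx⟩
    calc D {e} = D (rep (D {e})) := (hrep2 _ h).symm
      _ ≤ D γstar := hmono hsub
  -- each b e factors through (D γstar).arrow
  let u : ∀ e : E, B e ⟶ (D γstar : C) := fun e =>
    Sigma.ι (fun e' : ({e} : Set E) => B e'.1) ⟨e, rfl⟩ ≫ factorThruImageSubobject _
      ≫ Subobject.ofLE _ _ (hle e)
  have hu : ∀ e, u e ≫ (D γstar).arrow = b e := by
    intro e
    simp only [u, Category.assoc, Subobject.ofLE_arrow]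
    rw [imageSubobject_arrow_comp]
    simp
  have hfac : Sigma.desc b = Sigma.desc u ≫ (D γstar).arrow := by
    ext e
    simp [hu e]
  haveI : Epi (Sigma.desc u ≫ (D γstar).arrow) := by rw [← hfac]; exact hepi
  haveI : Epi ((D γstar).arrow) := epi_of_epi (Sigma.desc u) _
  haveI : IsIso ((D γstar).arrow) := isIso_of_mono_of_epi _
  refine ⟨γstar, hcard, ?_⟩
  have : Sigma.desc (fun e : γstar => b e.1)
      = factorThruImageSubobject _ ≫ (D γstar).arrow := (imageSubobject_arrow_comp _).symm
  rw [this]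
  exact epi_comp _ _


/-- The type of related pairs in a preorder. -/
abbrev Pairs (J : Type w) [Preorder J] : Type w := Σ p : J × J, PLift (p.1 ≤ p.2)

section Vanish

variable {S' : Type v} {G : S' → C} {κ μ : Cardinal.{v}}
variable {J : Type v} [PartialOrder J]
variable {D : J ⥤ C} {c : Cocone D}

set_option maxHeartbeats 2000000 in
/-- The vanishing lemma: in the setting of a nearly locally presentable abelian category,
a morphism from an object with few subobjects into a stage of a μ-directed colimit which
dies in the colimit already dies at some later stage. -/
lemma vanish (hc : IsColimit c)
    (hμ : μ.IsRegular) (hκμ : κ < μ) (hκ : κ.IsRegular)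
    (hJdir : IsCardinalDirected μ J)
    (hgen : ∀ {X Y : C} (s t : X ⟶ Y), (∀ (a : S') (f : G a ⟶ X), f ≫ s = f ≫ t) → s = t)
    (hpres : ∀ (a : S') {I : Type v} (K : I → C) (f : G a ⟶ ∐ K),
      ∃ (Js : SmallSub κ I) (g : G a ⟶ ∐ fun i : Js.1 => K i), g ≫ subInj κ K Js = f)
    [∀ X : C, Small.{v} (Subobject X)]
    {Y : C} (hY : #(Shrink.{v} (Subobject Y)) < μ)
    (j : J) (k : Y ⟶ D.obj j) (hk : k ≫ c.ι.app j = 0) :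
    ∃ (j' : J) (h : j ≤ j'), k ≫ D.map (homOfLE h) = 0 := by
  classical
  -- the canonical epi from the coproduct of all stages
  let q : (∐ D.obj) ⟶ c.pt := Sigma.desc (fun l => c.ι.app l)
  -- the relation map
  let Φ : (∐ fun m : Pairs J => D.obj m.1.1) ⟶ ∐ D.obj :=
    Sigma.desc (fun m => D.map (homOfLE m.2.down) ≫ Sigma.ι D.obj m.1.2 - Sigma.ι D.obj m.1.1)
  let π := cokernel.π Φ
  -- the cokernel of Φ receives a map from the colimit
  let w : Cocone D :=
    { pt := cokernel Φ
      ι :=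
        { app := fun l => Sigma.ι D.obj l ≫ π
          naturality := by
            intro l l' f
            have h0 : Sigma.ι _ (⟨(l, l'), ⟨leOfHom f⟩⟩ : Pairs J) ≫ Φ ≫ π = 0 := by
              rw [cokernel.condition, comp_zero]
            simp only [Φ, colimit.ι_desc_assoc, Cofan.mk_ι_app, Preadditive.sub_comp,
              Category.assoc, sub_eq_zero] at h0
            exact h0.trans (Category.comp_id _).symm } }
  let s : c.pt ⟶ cokernel Φ := hc.desc w
  have hqs : q ≫ s = π := by
    ext l
    simp only [q, colimit.ι_desc_assoc, Cofan.mk_ι_app]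
    exact hc.fac w l
  -- the morphism k, pushed into the coproduct, factors through the abelian image of Φ
  let k' : Y ⟶ ∐ D.obj := k ≫ Sigma.ι D.obj j
  have hk'π : k' ≫ π = 0 := by
    have h1 : k' ≫ q = k ≫ c.ι.app j := by simp [k', q]
    rw [← hqs, ← Category.assoc, h1, hk, zero_comp]
  let u : Y ⟶ Abelian.image Φ := kernel.lift π k' hk'π
  have hu : u ≫ kernel.ι π = k' := kernel.lift_ι _ _ _
  -- pull back the epi onto the image
  let Els : Type v := Σ a : S', (G a ⟶ pullback u (Abelian.factorThruImage Φ))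
  let fst := pullback.fst u (Abelian.factorThruImage Φ)
  let snd := pullback.snd u (Abelian.factorThruImage Φ)
  let bY : ∀ e : Els, G e.1 ⟶ Y := fun e => e.2 ≫ fst
  -- each generator element of V dies at some later stage
  have key : ∀ e : Els, ∃ (l : J) (hl : j ≤ l), bY e ≫ k ≫ D.map (homOfLE hl) = 0 := by
    intro e
    have key1 : bY e ≫ k' = (e.2 ≫ snd) ≫ Φ := by
      have h2 : fst ≫ u = snd ≫ Abelian.factorThruImage Φ := pullback.condition
      have h3 : bY e ≫ k' = e.2 ≫ fst ≫ u ≫ kernel.ι π := by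
        rw [hu]; simp [bY]
      rw [h3, reassoc_of% h2,
        show Abelian.factorThruImage Φ ≫ kernel.ι π = Φ from Abelian.image.fac Φ,
        ← Category.assoc]
    obtain ⟨F, g', hg'⟩ := hpres e.1 (fun m : Pairs J => D.obj m.1.1) (e.2 ≫ snd)
    -- the set of indices involved
    let F' : Set J := insert j (⋃ m : F.1, ({(m : Pairs J).1.1, (m : Pairs J).1.2} : Set J))
    have hF' : #F' < κ := by
      refine lt_of_le_of_lt (Cardinal.mk_insert_le) ?_
      have h3 : #(⋃ m : F.1, ({(m : Pairs J).1.1, (m : Pairs J).1.2} : Set J)) ≤ #F.1 * 2 := by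
        refine le_trans (Cardinal.mk_iUnion_le _) ?_
        refine mul_le_mul' le_rfl ?_
        refine ciSup_le' ?_
        intro m
        exact le_trans (Cardinal.mk_insert_le) (by rw [Cardinal.mk_singleton]; norm_num)
      have h4 : #F.1 * 2 < κ :=
        Cardinal.mul_lt_of_lt hκ.aleph0_le F.2
          (lt_of_lt_of_le (by exact_mod_cast Cardinal.nat_lt_aleph0 2) hκ.aleph0_le)
      exact Cardinal.add_lt_of_lt hκ.aleph0_le (lt_of_le_of_lt h3 h4)
          (lt_of_lt_of_le Cardinal.one_lt_aleph0 hκ.aleph0_le)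
    have hmemj : j ∈ F' := Set.mem_insert _ _
    have hmem1 : ∀ m : F.1, (m : Pairs J).1.1 ∈ F' := fun m =>
      Set.mem_insert_of_mem _ (Set.mem_iUnion.2 ⟨m, Set.mem_insert _ _⟩)
    have hmem2 : ∀ m : F.1, (m : Pairs J).1.2 ∈ F' := fun m =>
      Set.mem_insert_of_mem _ (Set.mem_iUnion.2 ⟨m, Set.mem_insert_of_mem _ rfl⟩)
    obtain ⟨l0, hl0⟩ := hJdir F' (lt_trans hF' hκμ)
    have hjl0 : j ≤ l0 := hl0 j hmemj
    -- the relation map restricted to the subcoproduct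
    let ΦF : (∐ fun m : F.1 => D.obj (m : Pairs J).1.1) ⟶ (∐ fun l : F' => D.obj l.1) :=
      Sigma.desc (fun m => D.map (homOfLE (m : Pairs J).2.down)
          ≫ Sigma.ι (fun l : F' => D.obj l.1) ⟨(m : Pairs J).1.2, hmem2 m⟩
        - Sigma.ι (fun l : F' => D.obj l.1) ⟨(m : Pairs J).1.1, hmem1 m⟩)
    have hΦF : ΦF ≫ subInj κ D.obj ⟨F', hF'⟩
        = subInj κ (fun m : Pairs J => D.obj m.1.1) F ≫ Φ := by
      ext m
      simp [ΦF, Φ, subInj, Preadditive.sub_comp]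
    -- the subcoproduct inclusion is a split mono
    let r : (∐ D.obj) ⟶ (∐ fun l : F' => D.obj l.1) :=
      Sigma.desc (fun l => if h : l ∈ F' then Sigma.ι (fun l' : F' => D.obj l'.1) ⟨l, h⟩ else 0)
    have hr : subInj κ D.obj ⟨F', hF'⟩ ≫ r = 𝟙 _ := by
      ext l
      simp [subInj, r, dif_pos l.2]
    -- the two maps into the subcoproduct agree
    have hA : (bY e ≫ k ≫ Sigma.ι (fun l : F' => D.obj l.1) ⟨j, hmemj⟩)
        ≫ subInj κ D.obj ⟨F', hF'⟩ = (g' ≫ ΦF) ≫ subInj κ D.obj ⟨F', hF'⟩ := by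
      have hιj : Sigma.ι (fun l : F' => D.obj l.1) ⟨j, hmemj⟩ ≫ subInj κ D.obj ⟨F', hF'⟩
          = Sigma.ι D.obj j := by simp [subInj]
      calc (bY e ≫ k ≫ Sigma.ι (fun l : F' => D.obj l.1) ⟨j, hmemj⟩)
            ≫ subInj κ D.obj ⟨F', hF'⟩ = bY e ≫ k' := by
            simp only [Category.assoc, hιj, k']
        _ = (e.2 ≫ snd) ≫ Φ := key1
        _ = g' ≫ subInj κ (fun m : Pairs J => D.obj m.1.1) F ≫ Φ := by rw [← hg']; simp
        _ = (g' ≫ ΦF) ≫ subInj κ D.obj ⟨F', hF'⟩ := by rw [← hΦF]; simp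
    have hAB : bY e ≫ k ≫ Sigma.ι (fun l : F' => D.obj l.1) ⟨j, hmemj⟩ = g' ≫ ΦF := by
      have hsplit : IsSplitMono (subInj κ D.obj ⟨F', hF'⟩) := IsSplitMono.mk' ⟨r, hr⟩
      exact (cancel_mono (subInj κ D.obj ⟨F', hF'⟩)).1 hA
    -- fold the subcoproduct into the stage l0
    let fold : (∐ fun l : F' => D.obj l.1) ⟶ D.obj l0 :=
      Sigma.desc (fun l => D.map (homOfLE (hl0 l.1 l.2)))
    have hfold0 : ΦF ≫ fold = 0 := by
      ext m
      simp only [ΦF, fold, colimit.ι_desc_assoc, Cofan.mk_ι_app, Preadditive.sub_comp,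
        Category.assoc, colimit.ι_desc, comp_zero]
      rw [← Functor.map_comp, homOfLE_comp, sub_self]
    refine ⟨l0, hjl0, ?_⟩
    have hfj : Sigma.ι (fun l : F' => D.obj l.1) ⟨j, hmemj⟩ ≫ fold = D.map (homOfLE hjl0) := by
      simp [fold]
    calc bY e ≫ k ≫ D.map (homOfLE hjl0)
        = (bY e ≫ k ≫ Sigma.ι (fun l : F' => D.obj l.1) ⟨j, hmemj⟩) ≫ fold := by
          simp only [Category.assoc, hfj]
      _ = (g' ≫ ΦF) ≫ fold := by rw [hAB]
      _ = 0 := by rw [Category.assoc, hfold0, comp_zero]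
  -- now cover Y by a small family and take a common bound of the stages
  choose st hst hst0 using key
  haveI hVepi : Epi fst := by
    haveI : Epi (Abelian.factorThruImage Φ) := by infer_instance
    infer_instance
  have htot : Epi (Sigma.desc bY) := by
    have heq : Sigma.desc bY = Sigma.desc (fun e : Els => e.2) ≫ fst := by
      ext e
      simp [bY]
    rw [heq]
    haveI : Epi (Sigma.desc (fun e : Els => e.2)) := epi_desc_of_gen hgen _
    exact epi_comp _ _
  obtain ⟨γ, hγcard, hγepi⟩ := exists_small_cover hμ hY (fun e : Els => bY e) htot
  let T : Set J := insert j (Set.range fun e : γ => st e.1)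
  have hTcard : #T < μ := by
    refine Cardinal.add_lt_of_lt hμ.aleph0_le ?_ ?_ |>.trans_le' Cardinal.mk_insert_le
    · exact lt_of_le_of_lt Cardinal.mk_range_le hγcard
    · exact lt_of_lt_of_le Cardinal.one_lt_aleph0 hμ.aleph0_le
  obtain ⟨lbig, hlbig⟩ := hJdir T hTcard
  have hjlbig : j ≤ lbig := hlbig j (Set.mem_insert _ _)
  refine ⟨lbig, hjlbig, ?_⟩
  have hzero : Sigma.desc (fun e : γ => bY e.1) ≫ k ≫ D.map (homOfLE hjlbig) = 0 := by
    ext e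
    have hstle : st e.1 ≤ lbig := hlbig _ (Set.mem_insert_of_mem _ ⟨e, rfl⟩)
    have hsplit : (homOfLE hjlbig : j ⟶ lbig)
        = homOfLE (hst e.1) ≫ homOfLE hstle := by
      rw [homOfLE_comp]
    simp only [colimit.ι_desc_assoc, Cofan.mk_ι_app, comp_zero, hsplit, Functor.map_comp]
    rw [reassoc_of% (hst0 e.1), zero_comp]
  exact zero_of_epi_comp (Sigma.desc (fun e : γ => bY e.1)) hzero

/-- Monomorphisms embed subobject lattices. -/
lemma mk_shrink_subobject_le_of_mono {X Y : C} (i : X ⟶ Y) [Mono i]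
    [Small.{v} (Subobject X)] [Small.{v} (Subobject Y)] :
    #(Shrink.{v} (Subobject X)) ≤ #(Shrink.{v} (Subobject Y)) := by
  have hinj : Function.Injective (fun T : Subobject X => Subobject.mk (T.arrow ≫ i)) := by
    intro T T' h
    simp only at h
    have he : (Subobject.isoOfMkEqMk _ _ h).hom ≫ (T'.arrow ≫ i) = T.arrow ≫ i :=
      Subobject.ofMkLEMk_comp h.le
    rw [← Category.assoc] at he
    have he2 : (Subobject.isoOfMkEqMk _ _ h).hom ≫ T'.arrow = T.arrow := (cancel_mono i).1 he
    calc T = Subobject.mk T.arrow := (Subobject.mk_arrow T).symm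
      _ = Subobject.mk T'.arrow :=
          Subobject.mk_eq_mk_of_comm _ _ (Subobject.isoOfMkEqMk _ _ h) he2
      _ = T' := Subobject.mk_arrow T'
  have h2 : Function.Injective
      (fun t : Shrink.{v} (Subobject X) =>
        equivShrink (Subobject Y) (Subobject.mk (((equivShrink (Subobject X)).symm t).arrow ≫ i))) := by
    intro t t' h
    have := hinj ((equivShrink (Subobject Y)).injective h)
    exact (equivShrink (Subobject X)).symm.injective this
  exact Cardinal.mk_le_of_injective h2

set_option maxHeartbeats 2000000 in
/-- The surjectivity lemma: every morphism from a generator into a μ-directed colimit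
factors through some stage. -/
lemma surj (hc : IsColimit c)
    (hμ : μ.IsRegular) (hκμ : κ < μ) (hκ : κ.IsRegular)
    {ν : Cardinal.{v}} (hν : ν.IsRegular) (hνμ : ν < μ)
    (hJdir : IsCardinalDirected μ J)
    (hgen : ∀ {X Y : C} (s t : X ⟶ Y), (∀ (a : S') (f : G a ⟶ X), f ≫ s = f ≫ t) → s = t)
    (hpres : ∀ (a : S') {I : Type v} (K : I → C) (f : G a ⟶ ∐ K),
      ∃ (Js : SmallSub κ I) (g : G a ⟶ ∐ fun i : Js.1 => K i), g ≫ subInj κ K Js = f)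
    [∀ X : C, Small.{v} (Subobject X)]
    {A : C} (hA : #(Shrink.{v} (Subobject A)) < ν)
    (hbound : ∀ (E0 : Type v) (σ : E0 → S'), #E0 < ν →
      #(Shrink.{v} (Subobject (∐ fun e => G (σ e)))) < μ)
    (f : A ⟶ c.pt) :
    ∃ (jf : J) (g : A ⟶ D.obj jf), g ≫ c.ι.app jf = f := by
  classical
  let q : (∐ D.obj) ⟶ c.pt := Sigma.desc (fun l => c.ι.app l)
  haveI hq : Epi q := by
    constructor
    intro Z s t hst
    refine hc.hom_ext (fun l => ?_)
    have := congrArg (fun x => Sigma.ι D.obj l ≫ x) hst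
    simpa [q] using this
  haveI : Epi (pullback.fst f q) := by infer_instance
  let Els : Type v := Σ a : S', (G a ⟶ pullback f q)
  let bA : ∀ e : Els, G e.1 ⟶ A := fun e => e.2 ≫ pullback.fst f q
  have key : ∀ e : Els, ∃ (l : J) (y : G e.1 ⟶ D.obj l), y ≫ c.ι.app l = bA e ≫ f := by
    intro e
    obtain ⟨F, g', hg'⟩ := hpres e.1 D.obj (e.2 ≫ pullback.snd f q)
    obtain ⟨l0, hl0⟩ := hJdir F.1 (lt_trans F.2 hκμ)
    let fold : (∐ fun l : F.1 => D.obj l.1) ⟶ D.obj l0 :=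
      Sigma.desc (fun l => D.map (homOfLE (hl0 l.1 l.2)))
    refine ⟨l0, g' ≫ fold, ?_⟩
    have hfoldq : fold ≫ c.ι.app l0 = subInj κ D.obj F ≫ q := by
      ext l
      simp [fold, subInj, q]
    have hcond : pullback.fst f q ≫ f = pullback.snd f q ≫ q := pullback.condition
    calc (g' ≫ fold) ≫ c.ι.app l0 = g' ≫ subInj κ D.obj F ≫ q := by
          rw [Category.assoc, hfoldq]
      _ = (e.2 ≫ pullback.snd f q) ≫ q := by rw [← Category.assoc, hg']
      _ = bA e ≫ f := by
          rw [Category.assoc, ← hcond]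
          simp [bA]
  choose st y hy using key
  have htot : Epi (Sigma.desc bA) := by
    have heq : Sigma.desc bA = Sigma.desc (fun e : Els => e.2) ≫ pullback.fst f q := by
      ext e
      simp [bA]
    rw [heq]
    haveI : Epi (Sigma.desc (fun e : Els => e.2)) := epi_desc_of_gen hgen _
    exact epi_comp _ _
  obtain ⟨γ, hγcard, hγepi⟩ := exists_small_cover hν hA bA htot
  let T : Set J := Set.range (fun e : γ => st e.1)
  have hT : #T < μ := lt_of_le_of_lt Cardinal.mk_range_le (lt_trans hγcard hνμ)
  obtain ⟨j0, hj0⟩ := hJdir T hT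
  let wmap : (∐ fun e : γ => G e.1.1) ⟶ D.obj j0 :=
    Sigma.desc (fun e => y e.1 ≫ D.map (homOfLE (hj0 _ ⟨e, rfl⟩)))
  let aa : (∐ fun e : γ => G e.1.1) ⟶ A := Sigma.desc (fun e => bA e.1)
  haveI haaepi : Epi aa := hγepi
  have hwf : wmap ≫ c.ι.app j0 = aa ≫ f := by
    ext e
    simp only [wmap, aa, colimit.ι_desc_assoc, Cofan.mk_ι_app, Category.assoc]
    rw [Cocone.w c (homOfLE (hj0 _ ⟨e, rfl⟩)), hy e.1]
  have hker : (kernel.ι aa ≫ wmap) ≫ c.ι.app j0 = 0 := by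
    rw [Category.assoc, hwf, ← Category.assoc, kernel.condition, zero_comp]
  have hkerbound : #(Shrink.{v} (Subobject (kernel aa))) < μ := by
    refine lt_of_le_of_lt (mk_shrink_subobject_le_of_mono (kernel.ι aa)) ?_
    exact hbound ↥γ (fun e => e.1.1) hγcard
  obtain ⟨l1, hl1, hvan⟩ := vanish hc hμ hκμ hκ hJdir hgen hpres hkerbound j0
    (kernel.ι aa ≫ wmap) hker
  have h0 : kernel.ι aa ≫ (wmap ≫ D.map (homOfLE hl1)) = 0 := by
    rw [← Category.assoc]
    exact hvan
  let g : A ⟶ D.obj l1 := Abelian.epiDesc aa (wmap ≫ D.map (homOfLE hl1)) h0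
  have hg : aa ≫ g = wmap ≫ D.map (homOfLE hl1) := Abelian.comp_epiDesc _ _ _
  refine ⟨l1, g, ?_⟩
  have hfinal : aa ≫ g ≫ c.ι.app l1 = aa ≫ f := by
    rw [← Category.assoc, hg, Category.assoc, Cocone.w c (homOfLE hl1), hwf]
  exact (cancel_epi aa).1 hfinal

set_option maxHeartbeats 2000000 in
/-- Presentability of generators. -/
lemma presentable_of_bounds
    (hμ : μ.IsRegular) (hκμ : κ < μ) (hκ : κ.IsRegular)
    {ν : Cardinal.{v}} (hν : ν.IsRegular) (hνμ : ν < μ)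
    (hgen : ∀ {X Y : C} (s t : X ⟶ Y), (∀ (a : S') (f : G a ⟶ X), f ≫ s = f ≫ t) → s = t)
    (hpres : ∀ (a : S') {I : Type v} (K : I → C) (f : G a ⟶ ∐ K),
      ∃ (Js : SmallSub κ I) (g : G a ⟶ ∐ fun i : Js.1 => K i), g ≫ subInj κ K Js = f)
    [∀ X : C, Small.{v} (Subobject X)]
    {A : C} (hA : #(Shrink.{v} (Subobject A)) < ν)
    (hbound : ∀ (E0 : Type v) (σ : E0 → S'), #E0 < ν →
      #(Shrink.{v} (Subobject (∐ fun e => G (σ e)))) < μ) :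
    PresentableObj μ A := by
  intro Jd _ hJdir
  haveI : Nonempty Jd := by
    obtain ⟨j, -⟩ := hJdir ∅ (by
      rw [Cardinal.mk_emptyCollection]
      exact lt_of_lt_of_le Cardinal.aleph0_pos hμ.aleph0_le)
    exact ⟨j⟩
  haveI : IsDirected Jd (· ≤ ·) := by
    constructor
    intro a b
    obtain ⟨j, hj⟩ := hJdir {a, b} (lt_of_lt_of_le ((Set.toFinite _).lt_aleph0) hμ.aleph0_le)
    exact ⟨j, hj a (by simp), hj b (by simp)⟩
  refine ⟨⟨fun {K} => ⟨fun {c} hc => ⟨?_⟩⟩⟩⟩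
  refine Types.FilteredColimit.isColimitOf _ _ ?_ ?_
  · -- surjectivity
    intro x
    obtain ⟨jf, g, hg⟩ := surj hc hμ hκμ hκ hν hνμ hJdir @hgen hpres hA hbound x
    exact ⟨jf, g, hg.symm⟩
  · -- injectivity
    intro i j xi xj hx
    obtain ⟨k0, hik, hjk⟩ := IsDirected.directed (r := (· ≤ ·)) i j
    have hx' : xi ≫ c.ι.app i = xj ≫ c.ι.app j := hx
    have hd : (xi ≫ K.map (homOfLE hik) - xj ≫ K.map (homOfLE hjk)) ≫ c.ι.app k0 = 0 := by
      rw [Preadditive.sub_comp, Category.assoc, Category.assoc,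
        Cocone.w c (homOfLE hik), Cocone.w c (homOfLE hjk), hx', sub_self]
    obtain ⟨k1, hk1, hvan⟩ := vanish hc hμ hκμ hκ hJdir @hgen hpres (lt_trans hA hνμ) k0
      (xi ≫ K.map (homOfLE hik) - xj ≫ K.map (homOfLE hjk)) hd
    refine ⟨k1, homOfLE (le_trans hik hk1), homOfLE (le_trans hjk hk1), ?_⟩
    have h1 : xi ≫ K.map (homOfLE (le_trans hik hk1))
        = xj ≫ K.map (homOfLE (le_trans hjk hk1)) := by
      rw [Preadditive.sub_comp, Category.assoc, Category.assoc, ← Functor.map_comp,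
        ← Functor.map_comp, homOfLE_comp, homOfLE_comp, sub_eq_zero] at hvan
      exact hvan
    exact h1

end Vanish

lemma eqToHom_comp_ι {I : Type v} (K : I → C) {i i' : I} (h : i = i') :
    eqToHom (congrArg K h) ≫ Sigma.ι K i' = Sigma.ι K i := by
  cases h
  simp

end Work

open Cardinal in
set_option maxHeartbeats 2000000 in
theorem stmt8' {C : Type u} [Category.{v} C] [Abelian C]
    (h : ∃ κ : Cardinal.{v}, IsNearlyLocallyPresentable κ C) :
    ∃ μ : Cardinal.{v}, IsLocallyPresentable μ C := by
  classical
  obtain ⟨κ, hn⟩ := h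
  haveI := hn.cocomplete
  have hκ := hn.isRegular
  obtain ⟨S, hSg, hSpres⟩ := hn.exists_gen
  haveI hsmallS : Small.{v} ↥S := hSg.small
  haveI hsub : ∀ X : C, Small.{v} (Subobject X) := small_subobject_of_wcwp hn.wcwp
  set S' := Shrink.{v} ↥S with hS'
  set G : S' → C := fun a => ((equivShrink ↥S).symm a : C) with hG
  -- joint epimorphicity of the generators, from faithfulness
  have hgen : ∀ {X Y : C} (s t : X ⟶ Y),
      (∀ (a : S') (f : G a ⟶ X), f ≫ s = f ≫ t) → s = t := by
    intro X Y s t hst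
    have hall : ∀ (B : C), B ∈ S → ∀ (f : B ⟶ X), f ≫ s = f ≫ t := by
      intro B hB
      obtain ⟨a, ha⟩ := (equivShrink ↥S).symm.surjective ⟨B, hB⟩
      have hb : G a = B := congrArg Subtype.val ha
      subst hb
      intro f
      exact hst a f
    haveI := hSg.faithful
    apply Functor.map_injective (restrictedYoneda S)
    apply NatTrans.ext
    funext b
    ext f
    exact hall _ b.unop.property f
  -- the factorization property of the generators
  have hpres : ∀ (a : S') {I : Type v} (K : I → C) (f : G a ⟶ ∐ K),
      ∃ (Js : SmallSub κ I) (g : G a ⟶ ∐ fun i : Js.1 => K i), g ≫ subInj κ K Js = f := by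
    intro a I K f
    exact NearlyPresentable.exists_factor (hSpres _ ((equivShrink ↥S).symm a).property) K f
  -- choice of cardinals
  set ν : Cardinal.{v} :=
    Order.succ (κ + Cardinal.aleph0 +
      Cardinal.sum (fun a : S' => #(Shrink.{v} (Subobject (G a))))) with hνdef
  have hbase : Cardinal.aleph0 ≤ κ + Cardinal.aleph0 +
      Cardinal.sum (fun a : S' => #(Shrink.{v} (Subobject (G a)))) :=
    le_trans (le_add_self) (le_self_add)
  have hν : ν.IsRegular := Cardinal.isRegular_succ hbase
  have hκν : κ < ν :=
    lt_of_le_of_lt (le_trans le_self_add le_self_add) (Order.lt_succ _)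
  have hAν : ∀ a : S', #(Shrink.{v} (Subobject (G a))) < ν := fun a =>
    lt_of_le_of_lt (le_trans (Cardinal.le_sum _ a) le_add_self) (Order.lt_succ _)
  set Λ : Type v := (ν.ord).ToType with hΛ
  have hΛcard : #Λ = ν := by rw [hΛ, Cardinal.mk_toType, Cardinal.card_ord]
  set W : Type v := Σ E : Set Λ, (↥E → S') with hW
  set μ : Cardinal.{v} :=
    Order.succ (ν + Cardinal.sum
      (fun w : W => #(Shrink.{v} (Subobject (∐ fun e : ↥w.1 => G (w.2 e)))))) with hμdef
  have hμ : μ.IsRegular := Cardinal.isRegular_succ (le_trans hν.aleph0_le le_self_add)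
  have hνμ : ν < μ := lt_of_le_of_lt le_self_add (Order.lt_succ _)
  have hκμ : κ < μ := lt_trans hκν hνμ
  -- the subobject bound for small coproducts of generators
  have hbound : ∀ (E0 : Type v) (σ : E0 → S'), #E0 < ν →
      #(Shrink.{v} (Subobject (∐ fun e => G (σ e)))) < μ := by
    intro E0 σ hE0
    have hle : #E0 ≤ #Λ := by rw [hΛcard]; exact hE0.le
    obtain ⟨emb⟩ := (Cardinal.le_def _ _).1 hle
    set E : Set Λ := Set.range emb with hE
    set eqv : E0 ≃ ↥E := Equiv.ofInjective emb emb.injective with heqv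
    set w : W := ⟨E, fun e => σ (eqv.symm e)⟩ with hw
    -- iso between the two coproducts
    let φ : (∐ fun e : E0 => G (σ e)) ⟶ (∐ fun e : ↥E => G (σ (eqv.symm e))) :=
      Sigma.desc (fun e =>
        eqToHom (congrArg (fun x : E0 => G (σ x)) (eqv.symm_apply_apply e).symm) ≫
          Sigma.ι (fun e' : ↥E => G (σ (eqv.symm e'))) (eqv e))
    let ψ : (∐ fun e : ↥E => G (σ (eqv.symm e))) ⟶ (∐ fun e : E0 => G (σ e)) :=
      Sigma.desc (fun e => Sigma.ι (fun e0 : E0 => G (σ e0)) (eqv.symm e))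
    have hφψ : φ ≫ ψ = 𝟙 _ := by
      ext e
      simp only [φ, ψ, colimit.ι_desc_assoc, Cofan.mk_ι_app, Category.assoc, colimit.ι_desc,
        Category.comp_id]
      exact eqToHom_comp_ι (fun x : E0 => G (σ x)) (eqv.symm_apply_apply e).symm
    have hψφ : ψ ≫ φ = 𝟙 _ := by
      ext e
      simp only [φ, ψ, colimit.ι_desc_assoc, Cofan.mk_ι_app, Category.assoc, colimit.ι_desc,
        Category.comp_id]
      exact eqToHom_comp_ι (fun e' : ↥E => G (σ (eqv.symm e'))) (eqv.apply_symm_apply e).symm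
    haveI : IsIso φ := ⟨ψ, hφψ, hψφ⟩
    haveI : Mono φ := inferInstance
    refine lt_of_le_of_lt (mk_shrink_subobject_le_of_mono φ) ?_
    refine lt_of_le_of_lt (le_trans (Cardinal.le_sum
      (fun w : W => #(Shrink.{v} (Subobject (∐ fun e : ↥w.1 => G (w.2 e))))) w) le_add_self)
      (Order.lt_succ _)
  refine ⟨μ, hμ, hn.cocomplete, S, hSg, ?_⟩
  intro A hA
  have hAeq : G (equivShrink ↥S ⟨A, hA⟩) = A := by simp [hG]
  rw [← hAeq]
  exact presentable_of_bounds hμ hκμ hκ hν hνμ @hgen hpres (hAν _) hbound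

end NLP

/-- Every nearly locally presentable abelian category is locally
presentable. -/
theorem NLP.stmt8 {C : Type u} [Category.{v} C] [Abelian C]
    (h : ∃ κ : Cardinal.{v}, IsNearlyLocallyPresentable κ C) :
    ∃ μ : Cardinal.{v}, IsLocallyPresentable μ C := by
  exact NLP.stmt8' h
end

section
/- Let A be a strong generator in a cocomplete, weakly co-wellpowered category K. Then A is weakly colimit-dense in K; that is, the smallest full subcategory of K containing A and closed under colimits is K itself. -/
universe w v u u₁ u₂

open CategoryTheory CategoryTheory.Limits Opposite

/-- Iso closure of a colimit-closed class. -/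
lemma memT_of_iso' {C : Type u} [Category.{v} C] {T : Set C}
    (hT : NLP.ClosedUnderColimits T) {Y Z : C} (i : Y ≅ Z) (hZ : Z ∈ T) : Y ∈ T := by
  refine hT ((Functor.const (Discrete PUnit.{v+1})).obj Z) (fun _ => hZ)
    ⟨Y, ⟨fun _ => i.inv, ?_⟩⟩ ?_
  · intro a b f
    simp
  · refine { desc := fun s => i.hom ≫ s.ι.app ⟨PUnit.unit⟩, fac := ?_, uniq := ?_ }
    · intro s j
      obtain ⟨⟨⟩⟩ := j
      simp
    · intro s m hm
      have := hm ⟨PUnit.unit⟩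
      simp at this
      show m = i.hom ≫ s.ι.app ⟨PUnit.unit⟩
      rw [← this, ← Category.assoc, i.hom_inv_id]
      exact (Category.id_comp m).symm

/-- A "transfinite composite" of strong epis into a colimit is a strong epi. -/
lemma strongEpi_into_colimit' {C : Type u} [Category.{v} C] {J : Type u₁} [Category.{u₂} J]
    {F : J ⥤ C} (c : Cocone F) (hc : IsColimit c) {X₀ : C} (q : ∀ j, X₀ ⟶ F.obj j)
    (hq : ∀ j, StrongEpi (q j)) (j₀ : J)
    (hconst : ∀ j, q j ≫ c.ι.app j = q j₀ ≫ c.ι.app j₀) :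
    StrongEpi (q j₀ ≫ c.ι.app j₀) := by
  constructor
  · constructor
    intro W a b hab
    refine hc.hom_ext fun j => ?_
    haveI := hq j
    refine (cancel_epi (q j)).1 ?_
    calc q j ≫ c.ι.app j ≫ a = (q j ≫ c.ι.app j) ≫ a := by rw [Category.assoc]
      _ = (q j₀ ≫ c.ι.app j₀) ≫ a := by rw [hconst j]
      _ = (q j₀ ≫ c.ι.app j₀) ≫ b := hab
      _ = (q j ≫ c.ι.app j) ≫ b := by rw [hconst j]
      _ = q j ≫ c.ι.app j ≫ b := by rw [Category.assoc]
  · intro Xz Yz z hz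
    constructor
    intro f g sq
    have hsq : ∀ j : J, CommSq f (q j) z (c.ι.app j ≫ g) := by
      intro j
      constructor
      rw [sq.w, ← Category.assoc, ← hconst j, Category.assoc]
    haveI : ∀ j : J, HasLiftingProperty (q j) z := fun j => (hq j).llp z
    let t : ∀ j : J, F.obj j ⟶ Xz := fun j => (hsq j).lift
    have ht1 : ∀ j, q j ≫ t j = f := fun j => (hsq j).fac_left
    have ht2 : ∀ j, t j ≫ z = c.ι.app j ≫ g := fun j => (hsq j).fac_right
    have hnat : ∀ {j j' : J} (k : j ⟶ j'), F.map k ≫ t j' = t j := by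
      intro j j' k
      rw [← cancel_mono z, Category.assoc, ht2, ht2, ← Category.assoc, c.w]
    let l : c.pt ⟶ Xz := hc.desc ⟨Xz, fun j => t j, by intro a b k; simp [hnat k]⟩
    have hl : ∀ j, c.ι.app j ≫ l = t j := fun j => hc.fac _ j
    constructor; constructor
    refine { l := l, fac_left := ?_, fac_right := ?_ }
    · rw [Category.assoc, hl, ht1]
    · refine hc.hom_ext fun j => ?_
      rw [← Category.assoc, hl, ht2]

/-- A strong generator `S` in a cocomplete weakly co-wellpowered
category is weakly colimit-dense: every class of objects containing `S` and closed
under colimits contains every object. -/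
theorem NLP.stmt10 {C : Type u} [Category.{v} C] [HasColimitsOfSize.{v, v} C]
    (hw : WeaklyCoWellPowered C) (S : Set C) (hS : IsStrongGenerator S)
    (T : Set C) (hST : S ⊆ T) (hT : ClosedUnderColimits T) (X : C) :
    X ∈ T := by
  classical
  obtain ⟨hsmall, hfaith, hrefl⟩ := hS
  haveI := hsmall
  let e := equivShrink (↥S)
  let G : ((s : Shrink.{v} ↥S) × (((e.symm s : ↥S) : C) ⟶ X)) → C :=
    fun i => ((e.symm i.1 : ↥S) : C)
  let X₀ : C := ∐ G
  let g₀ : X₀ ⟶ X := Sigma.desc fun i => i.2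
  have hX₀T : X₀ ∈ T :=
    hT (Discrete.functor G) (fun j => hST (e.symm j.as.1).2)
      (colimit.cocone _) (colimit.isColimit _)
  obtain ⟨ιq, Z, p, hse, hquot⟩ := hw X₀
  letI : Preorder ιq :=
    { le := fun i j => ∃ f : Z i ⟶ Z j, p i ≫ f = p j
      le_refl := fun i => ⟨𝟙 _, Category.comp_id _⟩
      le_trans := fun i j k hij hjk => by
        obtain ⟨f, hf⟩ := hij; obtain ⟨g, hg⟩ := hjk
        exact ⟨f ≫ g, by rw [← Category.assoc, hf, hg]⟩ }
  let P : Set ιq := {i | Z i ∈ T ∧ ∃ h : Z i ⟶ X, p i ≫ h = g₀}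
  have hzorn : ∀ c ⊆ P, IsChain (· ≤ ·) c → ∃ ub ∈ P, ∀ z ∈ c, z ≤ ub := by
    intro c hcP hchain
    rcases Set.eq_empty_or_nonempty c with rfl | ⟨i₀v, hi₀⟩
    · obtain ⟨ib, eb, hib⟩ := hquot X₀ (𝟙 X₀) (strongEpi_of_isIso _)
      refine ⟨ib, ⟨memT_of_iso' hT eb hX₀T,
        ⟨eb.hom ≫ g₀, by rw [← Category.assoc, hib, Category.id_comp]⟩⟩, ?_⟩
      intro z hz
      exact absurd hz (Set.notMem_empty z)
    · haveI : Nonempty ↥c := ⟨⟨i₀v, hi₀⟩⟩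
      let F : ↥c ⥤ C :=
        { obj := fun i => Z i.1
          map := fun {i j} g => (leOfHom g).choose
          map_id := fun i => by
            haveI := hse i.1
            refine (cancel_epi (p i.1)).1 ?_
            rw [(leOfHom (𝟙 i)).choose_spec, Category.comp_id]
          map_comp := fun {i j k} g g' => by
            haveI := hse i.1
            refine (cancel_epi (p i.1)).1 ?_
            rw [(leOfHom (g ≫ g')).choose_spec, ← Category.assoc,
              (leOfHom g).choose_spec, (leOfHom g').choose_spec] }
      let co := colimit.cocone F
      have hkey : ∀ i j : ↥c, i ≤ j → p i.1 ≫ co.ι.app i = p j.1 ≫ co.ι.app j := by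
        intro i j hij
        have h1 : F.map (homOfLE hij) ≫ co.ι.app j = co.ι.app i := co.w (homOfLE hij)
        have h2 : p i.1 ≫ F.map (homOfLE hij) = p j.1 :=
          (leOfHom (homOfLE hij)).choose_spec
        rw [← h1, ← Category.assoc, h2]
      have hcomp : ∀ i j : ↥c, p i.1 ≫ co.ι.app i = p j.1 ≫ co.ι.app j := by
        intro i j
        rcases eq_or_ne i j with rfl | hne
        · rfl
        · rcases hchain.total i.2 j.2 with h | h
          · exact hkey i j h
          · exact (hkey j i h).symm
      let i₀ : ↥c := ⟨i₀v, hi₀⟩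
      have hqs : StrongEpi (p i₀.1 ≫ co.ι.app i₀) :=
        strongEpi_into_colimit' co (colimit.isColimit F) (fun j => p j.1)
          (fun j => hse j.1) i₀ (fun j => hcomp j i₀)
      have hmap_spec : ∀ i : ↥c, p i.1 ≫ (hcP i.2).2.choose = g₀ :=
        fun i => (hcP i.2).2.choose_spec
      let hstar : co.pt ⟶ X := colimit.desc F
        ⟨X, ⟨fun i => (hcP i.2).2.choose, by
          intro i j g
          haveI := hse i.1
          have h2 : p i.1 ≫ F.map g = p j.1 := (leOfHom g).choose_spec
          dsimp
          rw [Category.comp_id]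
          refine (cancel_epi (p i.1)).1 ?_
          rw [← Category.assoc, h2, hmap_spec, hmap_spec]⟩⟩
      obtain ⟨jb, ejb, hjb⟩ := hquot co.pt (p i₀.1 ≫ co.ι.app i₀) hqs
      have hptT : co.pt ∈ T := hT F (fun i => (hcP i.2).1) co (colimit.isColimit F)
      refine ⟨jb, ⟨memT_of_iso' hT ejb hptT, ⟨ejb.hom ≫ hstar, ?_⟩⟩, ?_⟩
      · rw [← Category.assoc, hjb, Category.assoc]
        have : co.ι.app i₀ ≫ hstar = (hcP i₀.2).2.choose := colimit.ι_desc _ i₀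
        rw [this, hmap_spec]
      · intro z hz
        refine ⟨co.ι.app ⟨z, hz⟩ ≫ ejb.inv, ?_⟩
        rw [← Category.assoc, hcomp ⟨z, hz⟩ i₀, ← hjb, Category.assoc,
          Iso.hom_inv_id, Category.comp_id]
  obtain ⟨mI, hmP, hmax⟩ := zorn_le₀ P hzorn
  have hZmT : Z mI ∈ T := hmP.1
  have hhspec : p mI ≫ hmP.2.choose = g₀ := hmP.2.choose_spec
  set hh := hmP.2.choose with hhdef
  have hbij : ∀ B : (ObjectProperty.FullSubcategory (· ∈ S))ᵒᵖ,
      Function.Bijective (fun u : B.unop.obj ⟶ Z mI => u ≫ hh) := by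
    intro B
    constructor
    · intro u v huv
      have huv' : u ≫ hh = v ≫ hh := huv
      let eW : Z mI ⟶ coequalizer u v := coequalizer.π u v
      have hWT : coequalizer u v ∈ T := by
        refine hT (AsSmall.equiv.symm.functor ⋙ parallelPair u v) (fun j => ?_)
          ((colimit.cocone (parallelPair u v)).whisker AsSmall.equiv.symm.functor)
          (IsColimit.whiskerEquivalence (colimit.isColimit _) AsSmall.equiv.symm)
        obtain ⟨jd⟩ := j
        cases jd
        · exact hST B.unop.property
        · exact hZmT
      haveI := hse mI
      have hq' : StrongEpi (p mI ≫ eW) := strongEpi_comp _ _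
      obtain ⟨j2, ej2, hj2⟩ := hquot (coequalizer u v) (p mI ≫ eW) hq'
      have hj2P : j2 ∈ P := ⟨memT_of_iso' hT ej2 hWT,
        ⟨ej2.hom ≫ coequalizer.desc hh huv', by
          rw [← Category.assoc, hj2, Category.assoc, coequalizer.π_desc, hhspec]⟩⟩
      have hmj2 : mI ≤ j2 := ⟨eW ≫ ej2.inv, by
        rw [← Category.assoc, ← hj2, Category.assoc, Iso.hom_inv_id, Category.comp_id]⟩
      obtain ⟨f', hf'⟩ := hmax hj2P hmj2
      have hsplit : eW ≫ ej2.inv ≫ f' = 𝟙 (Z mI) := by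
        refine (cancel_epi (p mI)).1 ?_
        calc p mI ≫ eW ≫ ej2.inv ≫ f' = ((p mI ≫ eW) ≫ ej2.inv) ≫ f' := by
              rw [Category.assoc, Category.assoc]
          _ = ((p j2 ≫ ej2.hom) ≫ ej2.inv) ≫ f' := by rw [hj2]
          _ = p j2 ≫ f' := by simp
          _ = p mI := hf'
          _ = p mI ≫ 𝟙 _ := (Category.comp_id _).symm
      haveI : IsIso eW := ⟨⟨ej2.inv ≫ f', hsplit, by
        refine (cancel_epi eW).1 ?_
        rw [← Category.assoc, hsplit, Category.id_comp, Category.comp_id]⟩⟩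
      exact (cancel_mono eW).1 (coequalizer.condition u v)
    · intro f
      have hGA : ((e.symm (e ⟨B.unop.obj, B.unop.property⟩) : ↥S) : C) = B.unop.obj :=
        congrArg (fun s : ↥S => (s : C)) (e.symm_apply_apply ⟨B.unop.obj, B.unop.property⟩)
      have key : (eqToHom hGA.symm ≫
          Sigma.ι G ⟨e ⟨B.unop.obj, B.unop.property⟩, eqToHom hGA ≫ f⟩ ≫ p mI) ≫ hh = f := by
        rw [Category.assoc, Category.assoc, hhspec]
        have h3 : Sigma.ι G ⟨e ⟨B.unop.obj, B.unop.property⟩, eqToHom hGA ≫ f⟩ ≫ g₀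
            = eqToHom hGA ≫ f := Sigma.ι_desc _ _
        rw [h3, ← Category.assoc, eqToHom_trans, eqToHom_refl, Category.id_comp]
      exact ⟨_, key⟩
  haveI : ∀ B, IsIso (((restrictedYoneda S).map hh).app B) := by
    intro B
    rw [isIso_iff_bijective]
    exact hbij B
  haveI : IsIso ((restrictedYoneda S).map hh) := NatIso.isIso_of_isIso_app _
  haveI := hrefl
  haveI : IsIso hh := isIso_of_reflects_iso hh (restrictedYoneda S)
  exact memT_of_iso' hT (asIso hh).symm hZmT
end

section
/- Every nearly locally presentable category is complete, i.e., has all small limits. -/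
universe w v u u₁ u₂

open CategoryTheory CategoryTheory.Limits Opposite

namespace NLP

section Aux

variable {C : Type u} [Category.{v} C]

lemma strongEpi_head [HasColimitsOfSize.{v, v} C] {ι : Type v} {B : C} {Zo : ι → C}
    (ar : ∀ i, B ⟶ Zo i) (h : ∀ i, StrongEpi (ar i)) :
    StrongEpi (WidePushout.head ar) := by
  constructor
  · constructor
    intro T a b hab
    refine WidePushout.hom_ext _ _ _ (fun i => ?_) hab
    haveI := (h i).epi
    rw [← cancel_epi (ar i), WidePushout.arrow_ι_assoc, WidePushout.arrow_ι_assoc, hab]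
  · intro M Y z hz
    constructor
    intro f g sq
    have li : ∀ i, ∃ d : Zo i ⟶ M, ar i ≫ d = f ∧ d ≫ z = WidePushout.ι ar i ≫ g := by
      intro i
      haveI := (h i).llp z
      have sqi : CommSq f (ar i) z (WidePushout.ι ar i ≫ g) :=
        ⟨by rw [sq.w, ← WidePushout.arrow_ι_assoc]⟩
      exact ⟨sqi.lift, sqi.fac_left, sqi.fac_right⟩
    choose d hd1 hd2 using li
    exact CommSq.HasLift.mk' ⟨WidePushout.desc f d hd1, WidePushout.head_desc _ _ _ _,
      WidePushout.hom_ext _ _ _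
        (fun i => by rw [← Category.assoc, WidePushout.ι_desc, hd2])
        (by rw [← Category.assoc, WidePushout.head_desc, sq.w])⟩


lemma exists_strongEpi_mono_fact [HasColimitsOfSize.{v, v} C] (hw : WeaklyCoWellPowered C)
    {X Y : C} (f : X ⟶ Y) :
    ∃ (Z : C) (q : X ⟶ Z) (m : Z ⟶ Y), StrongEpi q ∧ Mono m ∧ q ≫ m = f := by
  obtain ⟨ι, Zq, p, hst, hrep⟩ := hw X
  let σ := {i : ι // ∃ g : Zq i ⟶ Y, p i ≫ g = f}
  let ar : ∀ i : σ, X ⟶ Zq i.1 := fun i => p i.1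
  let Zs := widePushout X (fun i : σ => Zq i.1) ar
  let q : X ⟶ Zs := WidePushout.head ar
  have hq : StrongEpi q := strongEpi_head ar (fun i => hst i.1)
  let m : Zs ⟶ Y := WidePushout.desc f (fun i => Classical.choose i.2)
      (fun i => Classical.choose_spec i.2)
  refine ⟨Zs, q, m, hq, ?_, WidePushout.head_desc _ _ _ _⟩
  constructor
  intro T a b hab
  haveI : Epi q := hq.epi
  haveI := hq
  let γ : Zs ⟶ coequalizer a b := coequalizer.π a b
  let m' : coequalizer a b ⟶ Y := coequalizer.desc m hab
  have hqγ : StrongEpi (q ≫ γ) := strongEpi_comp q γ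
  obtain ⟨i, e, he⟩ := hrep _ (q ≫ γ) hqγ
  have hi : ∃ g : Zq i ⟶ Y, p i ≫ g = f := ⟨e.hom ≫ m', by
    rw [← Category.assoc, he, Category.assoc, coequalizer.π_desc, WidePushout.head_desc]⟩
  let i' : σ := ⟨i, hi⟩
  have harr : p i ≫ WidePushout.ι ar i' = q := WidePushout.arrow_ι ar i'
  have hret : γ ≫ (e.inv ≫ WidePushout.ι ar i') = 𝟙 Zs := by
    rw [← cancel_epi q, Category.comp_id, ← Category.assoc, ← he, Category.assoc, Iso.hom_inv_id_assoc, harr]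
  haveI : IsSplitMono γ := IsSplitMono.mk' ⟨e.inv ≫ WidePushout.ι ar i', hret⟩
  haveI : IsIso γ := isIso_of_epi_of_isSplitMono γ
  exact (cancel_mono γ).1 (coequalizer.condition a b)


lemma strongEpi_canonical [HasColimitsOfSize.{v, v} C] (hw : WeaklyCoWellPowered C)
    (S : Set C) [Small.{v} S] [(restrictedYoneda S).ReflectsIsomorphisms] (X : C) :
    StrongEpi (Sigma.desc
      (fun p : Σ s : Shrink.{v} S, ((((equivShrink S).symm s : S) : C) ⟶ X) => p.2)) := by
  set eX := Sigma.desc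
      (fun p : Σ s : Shrink.{v} S, ((((equivShrink S).symm s : S) : C) ⟶ X) => p.2) with heX
  obtain ⟨Z₀, q₀, m₀, hq₀, hm₀, hfac⟩ := exists_strongEpi_mono_fact hw eX
  haveI := hm₀
  haveI := hq₀
  haveI hcomp : ∀ A, IsIso (((restrictedYoneda S).map m₀).app A) := by
    intro A
    rw [CategoryTheory.isIso_iff_bijective]
    constructor
    · intro g₁ g₂ hg
      have hg' : (g₁ : A.unop.obj ⟶ Z₀) ≫ m₀ = (g₂ : A.unop.obj ⟶ Z₀) ≫ m₀ := hg
      exact (cancel_mono m₀).1 hg'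
    · intro a
      have he : (((equivShrink S).symm (equivShrink S ⟨A.unop.obj, A.unop.property⟩) : S) : C)
          = A.unop.obj :=
        congrArg Subtype.val ((equivShrink S).symm_apply_apply ⟨A.unop.obj, A.unop.property⟩)
      refine ⟨eqToHom he.symm ≫
        Sigma.ι (fun p : Σ s : Shrink.{v} S, ((((equivShrink S).symm s : S) : C) ⟶ X) =>
            ((((equivShrink S).symm p.1 : S)) : C))
          ⟨equivShrink S ⟨A.unop.obj, A.unop.property⟩, eqToHom he ≫ (a : A.unop.obj ⟶ X)⟩
           ≫ q₀, ?_⟩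
      show (eqToHom he.symm ≫ _ ≫ q₀) ≫ m₀ = a
      rw [Category.assoc, Category.assoc, hfac, heX, Sigma.ι_desc]
      simp
      exact (eqToHom_trans_assoc _ he (a : A.unop.obj ⟶ X)).trans (by rw [eqToHom_refl]; exact Category.id_comp (a : A.unop.obj ⟶ X))
  have hiso : IsIso ((restrictedYoneda S).map m₀) := NatIso.isIso_of_isIso_app _
  haveI : IsIso m₀ := isIso_of_reflects_iso m₀ (restrictedYoneda S)
  rw [← hfac]
  exact strongEpi_comp q₀ m₀

theorem hasLimits_key [HasColimitsOfSize.{v, v} C]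
    (hw : WeaklyCoWellPowered C) (S : Set C) [Small.{v} S]
    [(restrictedYoneda S).ReflectsIsomorphisms] : HasLimitsOfSize.{v, v} C := by
  constructor
  intro J hJ
  constructor
  intro F
  -- notation
  let ob : Shrink.{v} S → C := fun s => (((equivShrink S).symm s : S) : C)
  let CSet : Shrink.{v} S → Type v := fun s =>
    { t : ∀ j, ob s ⟶ F.obj j // ∀ {j j'} (f : j ⟶ j'), t j ≫ F.map f = t j' }
  let Ix : Type v := Σ s : Shrink.{v} S, CSet s
  let W : C := ∐ fun p : Ix => ob p.1
  let wc : ∀ j, W ⟶ F.obj j := fun j => Sigma.desc fun p => p.2.1 j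
  have hw_cone : ∀ {j j'} (f : j ⟶ j'), wc j ≫ F.map f = wc j' := by
    intro j j' f
    refine Sigma.hom_ext _ _ fun p => ?_
    rw [← Category.assoc, Sigma.ι_desc, Sigma.ι_desc]
    exact p.2.2 f
  obtain ⟨ιt, Zq, p, hst, hrep⟩ := hw W
  let ι' := {i : ιt // ∃ c : ∀ j, Zq i ⟶ F.obj j, ∀ j, p i ≫ c j = wc j}
  let ar : ∀ i : ι', W ⟶ Zq i.1 := fun i => p i.1
  let Zst : C := widePushout W (fun i : ι' => Zq i.1) ar
  let q : W ⟶ Zst := WidePushout.head ar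
  have hqst : StrongEpi q := strongEpi_head ar fun i => hst i.1
  haveI := hqst
  haveI : Epi q := hqst.epi
  let cI : ∀ i : ι', ∀ j, Zq i.1 ⟶ F.obj j := fun i => Classical.choose i.2
  have hcI : ∀ (i : ι') j, p i.1 ≫ cI i j = wc j := fun i => Classical.choose_spec i.2
  let z : ∀ j, Zst ⟶ F.obj j := fun j =>
    WidePushout.desc (wc j) (fun i => cI i j) (fun i => hcI i j)
  have hqz : ∀ j, q ≫ z j = wc j := fun j => WidePushout.head_desc _ _ _ _
  have hιz : ∀ (i : ι') j, WidePushout.ι ar i ≫ z j = cI i j := fun i j =>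
    WidePushout.ι_desc _ _ _ _ i
  have hz_cone : ∀ {j j'} (f : j ⟶ j'), z j ≫ F.map f = z j' := by
    intro j j' f
    rw [← cancel_epi q, ← Category.assoc, hqz, hw_cone f, hqz]
  -- uniqueness of factorizations through z
  have uniq0 : ∀ {T : C} (u₁ u₂ : T ⟶ Zst), (∀ j, u₁ ≫ z j = u₂ ≫ z j) → u₁ = u₂ := by
    intro T u₁ u₂ hu
    let γ : Zst ⟶ coequalizer u₁ u₂ := coequalizer.π u₁ u₂
    have hγq : StrongEpi (q ≫ γ) := strongEpi_comp q γ
    obtain ⟨i, e, he⟩ := hrep _ (q ≫ γ) hγq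
    have hi : ∃ c : ∀ j, Zq i ⟶ F.obj j, ∀ j, p i ≫ c j = wc j := by
      refine ⟨fun j => e.hom ≫ coequalizer.desc (z j) (hu j), fun j => ?_⟩
      rw [← Category.assoc, he, Category.assoc, coequalizer.π_desc, hqz]
    let i' : ι' := ⟨i, hi⟩
    have harr : p i ≫ WidePushout.ι ar i' = q := WidePushout.arrow_ι ar i'
    have hret : γ ≫ (e.inv ≫ WidePushout.ι ar i') = 𝟙 Zst := by
      rw [← cancel_epi q, Category.comp_id, ← Category.assoc, ← he, Category.assoc,
        Iso.hom_inv_id_assoc, harr]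
    haveI : IsSplitMono γ := IsSplitMono.mk' ⟨e.inv ≫ WidePushout.ι ar i', hret⟩
    haveI : IsIso γ := isIso_of_epi_of_isSplitMono γ
    exact (cancel_mono γ).1 (coequalizer.condition u₁ u₂)
  -- existence of factorizations through z
  have exlift : ∀ (T : C) (c : ∀ j, T ⟶ F.obj j),
      (∀ {j j'} (f : j ⟶ j'), c j ≫ F.map f = c j') → ∃ u : T ⟶ Zst, ∀ j, u ≫ z j = c j := by
    intro T c hc
    let IxT : Type v := Σ s : Shrink.{v} S, (ob s ⟶ T)
    let eT : (∐ fun pa : IxT => ob pa.1) ⟶ T := Sigma.desc fun pa => pa.2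
    have hT : StrongEpi eT := strongEpi_canonical hw S T
    haveI := hT
    haveI : Epi eT := hT.epi
    let toIx : IxT → Ix := fun pa =>
      ⟨pa.1, ⟨fun j => pa.2 ≫ c j, fun f => by rw [Category.assoc, hc]⟩⟩
    let r : (∐ fun pa : IxT => ob pa.1) ⟶ W := Sigma.desc fun pa =>
      Sigma.ι (fun p : Ix => ob p.1) (toIx pa)
    have hr : ∀ j, r ≫ wc j = eT ≫ c j := by
      intro j
      refine Sigma.hom_ext _ _ fun pa => ?_
      have h1 : Sigma.ι (fun pa : IxT => ob pa.1) pa ≫ r =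
          Sigma.ι (fun p : Ix => ob p.1) (toIx pa) := Sigma.ι_desc _ _
      have h2 : Sigma.ι (fun p : Ix => ob p.1) (toIx pa) ≫ wc j = pa.2 ≫ c j :=
        Sigma.ι_desc _ _
      have h3 : Sigma.ι (fun pa : IxT => ob pa.1) pa ≫ eT = pa.2 := Sigma.ι_desc _ _
      rw [← Category.assoc, h1, h2, ← Category.assoc, h3]
    -- the pushout of eT along r
    let P : C := pushout r eT
    let inl : W ⟶ P := pushout.inl r eT
    let inr : T ⟶ P := pushout.inr r eT
    have hinl : StrongEpi inl := by
      constructor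
      · constructor
        intro V a b hab
        refine pushout.hom_ext hab ?_
        rw [← cancel_epi eT, ← Category.assoc, ← pushout.condition, Category.assoc, hab,
          ← Category.assoc, pushout.condition, Category.assoc]
      · intro M Y zm hzm
        constructor
        intro f g sq
        haveI := hT.llp zm
        have sq2 : CommSq (r ≫ f) eT zm (inr ≫ g) :=
          ⟨by rw [Category.assoc, sq.w, ← Category.assoc, ← Category.assoc,
            ← pushout.condition]⟩
        refine CommSq.HasLift.mk' ⟨pushout.desc f sq2.lift sq2.fac_left.symm,
          pushout.inl_desc _ _ _, ?_⟩
        refine pushout.hom_ext ?_ ?_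
        · rw [← Category.assoc]
          show (inl ≫ pushout.desc f sq2.lift sq2.fac_left.symm) ≫ zm = inl ≫ g
          rw [pushout.inl_desc, sq.w]
        · rw [← Category.assoc]
          show (inr ≫ pushout.desc f sq2.lift sq2.fac_left.symm) ≫ zm = inr ≫ g
          rw [pushout.inr_desc, sq2.fac_right]
    -- the cone on P
    let z' : ∀ j, P ⟶ F.obj j := fun j => pushout.desc (wc j) (c j) (hr j)
    obtain ⟨i, e, he⟩ := hrep _ inl hinl
    have hi : ∃ cc : ∀ j, Zq i ⟶ F.obj j, ∀ j, p i ≫ cc j = wc j := by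
      refine ⟨fun j => e.hom ≫ z' j, fun j => ?_⟩
      rw [← Category.assoc, he]
      show inl ≫ z' j = wc j
      rw [pushout.inl_desc]
    let i' : ι' := ⟨i, hi⟩
    have hcieq : ∀ j, cI i' j = e.hom ≫ z' j := by
      intro j
      haveI := (hst i).epi
      rw [← cancel_epi (p i)]
      have h1 : p i ≫ cI i' j = wc j := hcI i' j
      rw [h1, ← Category.assoc, he]
      show wc j = inl ≫ z' j
      rw [pushout.inl_desc]
    refine ⟨inr ≫ e.inv ≫ WidePushout.ι ar i', fun j => ?_⟩
    rw [Category.assoc, Category.assoc, hιz i' j, hcieq j, Iso.inv_hom_id_assoc]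
    show inr ≫ z' j = c j
    rw [pushout.inr_desc]
  -- assemble the limit
  refine HasLimit.mk ⟨⟨Zst, ⟨z, ?_⟩⟩, ?_, ?_, ?_⟩
  · intro j j' f
    dsimp
    rw [Category.id_comp, hz_cone f]
  · exact fun s => Classical.choose (exlift s.pt (fun j => s.π.app j) (fun f => s.w f))
  · exact fun s j => Classical.choose_spec (exlift s.pt (fun j => s.π.app j) (fun f => s.w f)) j
  · intro s m hm
    refine uniq0 m _ fun j => ?_
    rw [Classical.choose_spec (exlift s.pt (fun j => s.π.app j) (fun f => s.w f)) j]
    exact hm j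

end Aux

end NLP

/-- Every nearly locally presentable category is complete. -/
theorem NLP.stmt11 {C : Type u} [Category.{v} C]
    (h : ∃ κ : Cardinal.{v}, IsNearlyLocallyPresentable κ C) :
    HasLimitsOfSize.{v, v} C := by
  obtain ⟨κ, hn⟩ := h
  haveI : HasColimitsOfSize.{v, v} C := hn.cocomplete
  obtain ⟨S, hS, -⟩ := hn.exists_gen
  haveI := hS.small
  haveI := hS.reflectsIsos
  exact NLP.hasLimits_key hn.wcwp S
end
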